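/- arXiv:1809.09681 — 4 statements merged into one kernel-verified Lean document; each statement's English description precedes it below -/
import Mathlib

section
/- For every nonnegative integer d, the value of the polynomial P_{d,d}(z) = \sum_{b=0}^{\lfloor d/2 \rfloor} \binom{2d-b}{d, b, d-2b} z^b at z = -1/3 equals 3^d \prod_{k=1}^{d} (1 - 1/(3k)); in particular P_{d,d}(-1/3) \neq 0. -/
/-- The multinomial coefficient `(a+b+c)! / (a! b! c!)`. -/
def mult3 (a b c : ℕ) : ℕ := (a + b + c).factorial / (a.factorial * b.factorial * c.factorial)

/-- `P k n z = ∑_{b=0}^{⌊n/2⌋} multinomial(k+n-b; k, b, n-2b) z^b`. -/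
def Ppoly (k n : ℕ) (z : ℚ) : ℚ :=
  ∑ b ∈ Finset.range (n / 2 + 1), (mult3 k b (n - 2 * b) : ℚ) * z ^ b

open Finset

lemma fact_cast_succ (m : ℕ) : (((m+1).factorial : ℚ)) = ((m:ℚ)+1) * m.factorial := by
  rw [Nat.factorial_succ]; push_cast; ring

lemma fact_ne (m : ℕ) : ((m.factorial : ℚ)) ≠ 0 := by
  exact_mod_cast Nat.factorial_ne_zero m

lemma mult3_cast (a b c : ℕ) : (mult3 a b c : ℚ) =
    ((a+b+c).factorial : ℚ) / ((a.factorial : ℚ) * b.factorial * c.factorial) := by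
  have h : a.factorial * b.factorial * c.factorial ∣ (a+b+c).factorial := by
    calc a.factorial * b.factorial * c.factorial ∣ (a+b).factorial * c.factorial :=
      mul_dvd_mul_right (Nat.factorial_mul_factorial_dvd_factorial_add a b) _
    _ ∣ (a+b+c).factorial := Nat.factorial_mul_factorial_dvd_factorial_add (a+b) c
  have hne : ((a.factorial * b.factorial * c.factorial : ℕ) : ℚ) ≠ 0 := by
    exact_mod_cast Nat.mul_ne_zero (Nat.mul_ne_zero (Nat.factorial_ne_zero a)
      (Nat.factorial_ne_zero b)) (Nat.factorial_ne_zero c)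
  rw [mult3, Nat.cast_div h hne]
  push_cast; ring

def tQ (n b : ℕ) : ℚ :=
  if 2*b ≤ n then (mult3 n b (n - 2*b) : ℚ) * (-1/3)^b else 0

def gQ (d b : ℕ) : ℚ :=
  if 1 ≤ b ∧ 2*b ≤ d+1 then
    ((d:ℚ)+1) * (mult3 (d+1) (b-1) (d+1-2*b) : ℚ) * (-1/3)^(b-1) else 0

lemma Ppoly_eq_tQ (n m : ℕ) (hm : n/2 + 1 ≤ m) :
    Ppoly n n (-1/3) = ∑ b ∈ range m, tQ n b := by
  rw [Ppoly]
  rw [← Finset.sum_subset (Finset.range_subset_range.mpr hm)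
      (fun b _ hnb => by
        rw [tQ, if_neg]
        simp only [mem_range, not_lt] at hnb
        omega)]
  exact Finset.sum_congr rfl (fun b hb => by
    rw [tQ, if_pos]
    have := Finset.mem_range.mp hb
    omega)

set_option maxHeartbeats 1000000 in
lemma key (d b : ℕ) :
    ((d:ℚ)+1) * tQ (d+1) b - (3*(d:ℚ)+2) * tQ d b = gQ d (b+1) - gQ d b := by
  rcases Nat.lt_or_ge (d+1) (2*b) with h | h
  · -- 2*b ≥ d+2 : everything vanishes
    simp only [tQ, gQ]
    rw [if_neg (by omega), if_neg (by omega), if_neg (by omega), if_neg (by omega)]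
    ring
  rcases Nat.eq_or_lt_of_le h with h1 | h1
  · -- 2*b = d+1 (d odd, b ≥ 1)
    obtain ⟨b', rfl⟩ : ∃ b', b = b'+1 := ⟨b-1, by omega⟩
    obtain rfl : d = 2*b'+1 := by omega
    simp only [tQ, gQ]
    rw [if_pos (by omega), if_neg (by omega), if_neg (by omega), if_pos (by omega)]
    rw [show (2*b'+1)+1 - 2*(b'+1) = 0 from by omega,
        show (b'+1) - 1 = b' from by omega,
        show (2*b'+1)+1 = 2*b'+2 from by omega]
    simp only [mult3_cast]
    rw [show 2*b'+2+(b'+1)+0 = 3*b'+2+1 from by ring,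
        show 2*b'+2+b'+0 = 3*b'+2 from by ring]
    simp only [fact_cast_succ, Nat.factorial_zero, Nat.factorial_one]
    push_cast
    field_simp
    ring
  rcases Nat.eq_or_lt_of_le h1 with h2 | h2
  · -- 2*b = d
    rcases Nat.eq_zero_or_pos b with rfl | hb
    · -- d = 0, b = 0
      obtain rfl : d = 0 := by omega
      simp only [tQ, gQ]
      rw [if_pos (by omega), if_pos (by omega), if_neg (by omega), if_neg (by omega)]
      norm_num [mult3, Nat.factorial]
    · obtain ⟨b', rfl⟩ : ∃ b', b = b'+1 := ⟨b-1, by omega⟩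
      obtain rfl : d = 2*b'+2 := by omega
      simp only [tQ, gQ]
      rw [if_pos (by omega), if_pos (by omega), if_neg (by omega), if_pos (by omega)]
      rw [show (2*b'+2)+1 - 2*(b'+1) = 1 from by omega,
          show (2*b'+2) - 2*(b'+1) = 0 from by omega,
          show (b'+1) - 1 = b' from by omega,
          show (2*b'+2)+1 = 2*b'+3 from by omega]
      simp only [mult3_cast]
      rw [show 2*b'+3+(b'+1)+1 = 3*b'+3+1+1 from by ring,
          show 2*b'+2+(b'+1)+0 = 3*b'+3 from by ring,
          show 2*b'+3+b'+1 = 3*b'+3+1 from by ring]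
      simp only [fact_cast_succ, Nat.factorial_zero, Nat.factorial_one]
      push_cast
      field_simp
      ring
  -- 2*b + 1 ≤ d
  rcases Nat.eq_zero_or_pos b with rfl | hb
  · -- b = 0, d ≥ 1
    obtain ⟨e, rfl⟩ : ∃ e, d = e+1 := ⟨d-1, by omega⟩
    simp only [tQ, gQ]
    rw [if_pos (by omega), if_pos (by omega), if_pos (by omega), if_neg (by omega)]
    rw [show (e+1)+1 - 2*0 = e+2 from by omega,
        show (e+1) - 2*0 = e+1 from by omega,
        show (e+1)+1 - 2*(0+1) = e from by omega,
        show (0+1) - 1 = 0 from by omega,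
        show (e+1)+1 = e+2 from by omega]
    simp only [mult3_cast]
    rw [show e+2+0+(e+2) = 2*e+2+1+1 from by ring,
        show e+1+0+(e+1) = 2*e+2 from by ring,
        show e+2+0+e = 2*e+2 from by ring,
        show e+2 = e+1+1 from by ring]
    simp only [fact_cast_succ, Nat.factorial_zero, Nat.factorial_one]
    push_cast
    field_simp
    ring
  · -- generic: b ≥ 1, 2*b+1 ≤ d
    obtain ⟨b', rfl⟩ : ∃ b', b = b'+1 := ⟨b-1, by omega⟩
    obtain ⟨e, rfl⟩ : ∃ e, d = 2*b'+3+e := ⟨d-(2*b'+3), by omega⟩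
    simp only [tQ, gQ]
    rw [if_pos (by omega), if_pos (by omega), if_pos (by omega), if_pos (by omega)]
    rw [show (2*b'+3+e)+1 - 2*(b'+1) = e+2 from by omega,
        show (2*b'+3+e) - 2*(b'+1) = e+1 from by omega,
        show (2*b'+3+e)+1 - 2*(b'+1+1) = e from by omega,
        show (b'+1+1) - 1 = b'+1 from by omega,
        show (b'+1) - 1 = b' from by omega,
        show (2*b'+3+e)+1 = 2*b'+e+4 from by ring,
        show (2*b'+3+e) = 2*b'+e+3 from by ring]
    simp only [mult3_cast]
    rw [show 2*b'+e+4+(b'+1)+(e+2) = 3*b'+2*e+5+1+1 from by ring,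
        show 2*b'+e+3+(b'+1)+(e+1) = 3*b'+2*e+5 from by ring,
        show 2*b'+e+4+(b'+1)+e = 3*b'+2*e+5 from by ring,
        show 2*b'+e+4+b'+(e+2) = 3*b'+2*e+5+1 from by ring,
        show 2*b'+e+4 = 2*b'+e+3+1 from by ring,
        show e+2 = e+1+1 from by ring]
    simp only [fact_cast_succ]
    push_cast
    field_simp
    ring

lemma rec_step (d : ℕ) :
    ((d:ℚ)+1) * Ppoly (d+1) (d+1) (-1/3) = (3*(d:ℚ)+2) * Ppoly d d (-1/3) := by
  rw [← sub_eq_zero, Ppoly_eq_tQ (d+1) (d+2) (by omega), Ppoly_eq_tQ d (d+2) (by omega),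
      Finset.mul_sum, Finset.mul_sum, ← Finset.sum_sub_distrib]
  rw [Finset.sum_congr rfl (fun b _ => key d b), Finset.sum_range_sub (gQ d)]
  have h1 : gQ d (d+2) = 0 := by rw [gQ, if_neg (by omega)]
  have h2 : gQ d 0 = 0 := by rw [gQ, if_neg (by omega)]
  rw [h1, h2, sub_zero]

theorem stmt0 (d : ℕ) :
    Ppoly d d (-1/3) = 3 ^ d * ∏ k ∈ Finset.range d, (1 - 1 / (3 * ((k : ℚ) + 1))) ∧
      Ppoly d d (-1/3) ≠ 0 := by
  induction d with
  | zero =>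
    constructor
    · norm_num [Ppoly, mult3]
    · norm_num [Ppoly, mult3]
  | succ n ih =>
    have hn1 : ((n:ℚ)+1) ≠ 0 := by positivity
    have hval : Ppoly (n+1) (n+1) (-1/3) = (3*(n:ℚ)+2)/((n:ℚ)+1) * Ppoly n n (-1/3) := by
      have := rec_step n
      field_simp
      linarith [rec_step n]
    constructor
    · rw [hval, ih.1, Finset.prod_range_succ]
      have h3 : (3*((n:ℚ)+1)) ≠ 0 := by positivity
      field_simp
      ring
    · rw [hval]
      apply mul_ne_zero _ ih.2
      apply div_ne_zero _ hn1
      positivity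
end

section
/- For every d \geq 2, every complex root \lambda of p_d(z) = P_{d,d}(z) satisfies \lambda \notin \{0, -1/3, -1/4\}. -/
/-- `P k n z = ∑_{b=0}^{⌊n/2⌋} multinomial(k+n-b; k, b, n-2b) z^b` evaluated at `z : ℂ`. -/
noncomputable def Pval (k n : ℕ) (z : ℂ) : ℂ :=
  ∑ b ∈ Finset.range (n / 2 + 1), (mult3 k b (n - 2 * b) : ℂ) * z ^ b

lemma mult3_dvd (a b c : ℕ) : a.factorial * b.factorial * c.factorial ∣ (a+b+c).factorial := by
  calc a.factorial * b.factorial * c.factorial = a.factorial * (b.factorial * c.factorial) := by ring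
  _ ∣ a.factorial * (b+c).factorial :=
      mul_dvd_mul_left _ (Nat.factorial_mul_factorial_dvd_factorial_add b c)
  _ ∣ (a+(b+c)).factorial := Nat.factorial_mul_factorial_dvd_factorial_add a (b+c)
  _ = (a+b+c).factorial := by rw [add_assoc]

lemma mult3_mul (a b c : ℕ) :
    mult3 a b c * (a.factorial * b.factorial * c.factorial) = (a+b+c).factorial :=
  Nat.div_mul_cancel (mult3_dvd a b c)

lemma mult3_pos (a b c : ℕ) : 0 < mult3 a b c :=
  Nat.div_pos (Nat.le_of_dvd (a+b+c).factorial_pos (mult3_dvd a b c)) (by positivity)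

lemma mult3_castQ (a b c : ℕ) :
    (mult3 a b c : ℚ) = ((a+b+c).factorial : ℚ) / (a.factorial * b.factorial * c.factorial) := by
  rw [eq_div_iff (by positivity)]
  exact_mod_cast mult3_mul a b c

lemma factQ (n : ℕ) : ((n+1).factorial : ℚ) = ((n : ℚ)+1) * n.factorial := by
  rw [Nat.factorial_succ]; push_cast; ring

lemma key1 (c i : ℕ) :
    (2*c+i+4) * mult3 (2*c+i+4) (c+1) (i+2)
      = (6*c+3*i+11) * mult3 (2*c+i+3) (c+1) (i+1)
        + (3*c+2*i+5) * mult3 (2*c+i+3) (c+1) i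
        + 3*(3*c+2*i+6) * mult3 (2*c+i+3) c (i+2) := by
  qify
  rw [mult3_castQ, mult3_castQ, mult3_castQ, mult3_castQ,
    show (2*c+i+4)+(c+1)+(i+2) = (3*c+2*i+4)+1+1+1 from by ring,
    show (2*c+i+3)+(c+1)+(i+1) = (3*c+2*i+4)+1 from by ring,
    show (2*c+i+3)+(c+1)+i = 3*c+2*i+4 from by ring,
    show (2*c+i+3)+c+(i+2) = (3*c+2*i+4)+1 from by ring,
    show (2*c+i+4) = (2*c+i+3)+1 from by ring,
    show (i+2) = (i+1)+1 from by ring]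
  simp only [factQ]
  have hA : ((3*c+2*i+4).factorial : ℚ) ≠ 0 := by positivity
  have hB : ((2*c+i+3).factorial : ℚ) ≠ 0 := by positivity
  have hC : ((c).factorial : ℚ) ≠ 0 := by positivity
  have hI : ((i).factorial : ℚ) ≠ 0 := by positivity
  field_simp
  push_cast
  ring

lemma key1' (c i : ℕ) :
    4*(2*c+i+4)*(4*c+2*i+9) * mult3 (2*c+i+4) (c+1) (i+2)
      = 3*(6*c+3*i+11)*(6*c+3*i+13) * mult3 (2*c+i+3) (c+1) (i+1)
        + (12*c+5*i+27)*(3*c+2*i+5) * mult3 (2*c+i+3) (c+1) i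
        + 4*(12*c+5*i+25)*(3*c+2*i+6) * mult3 (2*c+i+3) c (i+2) := by
  qify
  rw [mult3_castQ, mult3_castQ, mult3_castQ, mult3_castQ,
    show (2*c+i+4)+(c+1)+(i+2) = (3*c+2*i+4)+1+1+1 from by ring,
    show (2*c+i+3)+(c+1)+(i+1) = (3*c+2*i+4)+1 from by ring,
    show (2*c+i+3)+(c+1)+i = 3*c+2*i+4 from by ring,
    show (2*c+i+3)+c+(i+2) = (3*c+2*i+4)+1 from by ring,
    show (2*c+i+4) = (2*c+i+3)+1 from by ring,
    show (i+2) = (i+1)+1 from by ring]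
  simp only [factQ]
  have hA : ((3*c+2*i+4).factorial : ℚ) ≠ 0 := by positivity
  have hB : ((2*c+i+3).factorial : ℚ) ≠ 0 := by positivity
  have hC : ((c).factorial : ℚ) ≠ 0 := by positivity
  have hI : ((i).factorial : ℚ) ≠ 0 := by positivity
  field_simp
  push_cast
  ring

lemma key2 (c : ℕ) :
    (2*c+3) * mult3 (2*c+3) (c+1) 1
      = (6*c+8) * mult3 (2*c+2) (c+1) 0 + 3*(3*c+4) * mult3 (2*c+2) c 1 := by
  qify
  rw [mult3_castQ, mult3_castQ, mult3_castQ,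
    show (2*c+3)+(c+1)+1 = (3*c+3)+1+1 from by ring,
    show (2*c+2)+(c+1)+0 = (3*c+3) from by ring,
    show (2*c+2)+c+1 = (3*c+3) from by ring,
    show (2*c+3) = (2*c+2)+1 from by ring]
  simp only [factQ, Nat.factorial_zero, Nat.factorial_one]
  have hA : ((3*c+3).factorial : ℚ) ≠ 0 := by positivity
  have hB : ((2*c+2).factorial : ℚ) ≠ 0 := by positivity
  have hC : ((c).factorial : ℚ) ≠ 0 := by positivity
  field_simp
  push_cast
  ring

lemma key2' (c : ℕ) :
    4*(2*c+3)*(4*c+7) * mult3 (2*c+3) (c+1) 1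
      = 3*(6*c+8)*(6*c+10) * mult3 (2*c+2) (c+1) 0
        + 4*(12*c+20)*(3*c+4) * mult3 (2*c+2) c 1 := by
  qify
  rw [mult3_castQ, mult3_castQ, mult3_castQ,
    show (2*c+3)+(c+1)+1 = (3*c+3)+1+1 from by ring,
    show (2*c+2)+(c+1)+0 = (3*c+3) from by ring,
    show (2*c+2)+c+1 = (3*c+3) from by ring,
    show (2*c+3) = (2*c+2)+1 from by ring]
  simp only [factQ, Nat.factorial_zero, Nat.factorial_one]
  have hA : ((3*c+3).factorial : ℚ) ≠ 0 := by positivity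
  have hB : ((2*c+2).factorial : ℚ) ≠ 0 := by positivity
  have hC : ((c).factorial : ℚ) ≠ 0 := by positivity
  field_simp
  push_cast
  ring

lemma key3 (c : ℕ) :
    (2*c+2) * mult3 (2*c+2) (c+1) 0 = 3*(3*c+2) * mult3 (2*c+1) c 0 := by
  qify
  rw [mult3_castQ, mult3_castQ,
    show (2*c+2)+(c+1)+0 = (3*c+1)+1+1 from by ring,
    show (2*c+1)+c+0 = (3*c+1) from by ring,
    show (2*c+2) = (2*c+1)+1 from by ring]
  simp only [factQ, Nat.factorial_zero]
  have hA : ((3*c+1).factorial : ℚ) ≠ 0 := by positivity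
  have hB : ((2*c+1).factorial : ℚ) ≠ 0 := by positivity
  have hC : ((c).factorial : ℚ) ≠ 0 := by positivity
  field_simp
  push_cast
  ring

lemma key3' (c : ℕ) :
    4*(2*c+2)*(4*c+5) * mult3 (2*c+2) (c+1) 0
      = 4*(12*c+15)*(3*c+2) * mult3 (2*c+1) c 0 := by
  qify
  rw [mult3_castQ, mult3_castQ,
    show (2*c+2)+(c+1)+0 = (3*c+1)+1+1 from by ring,
    show (2*c+1)+c+0 = (3*c+1) from by ring,
    show (2*c+2) = (2*c+1)+1 from by ring]
  simp only [factQ, Nat.factorial_zero]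
  have hA : ((3*c+1).factorial : ℚ) ≠ 0 := by positivity
  have hB : ((2*c+1).factorial : ℚ) ≠ 0 := by positivity
  have hC : ((c).factorial : ℚ) ≠ 0 := by positivity
  field_simp
  push_cast
  ring

lemma keyb0 (e : ℕ) :
    (e+2) * mult3 (e+2) 0 (e+2)
      = (3*e+5) * mult3 (e+1) 0 (e+1) + (2*e+2) * mult3 (e+1) 0 e := by
  qify
  rw [mult3_castQ, mult3_castQ, mult3_castQ,
    show (e+2)+0+(e+2) = (2*e+1)+1+1+1 from by ring,
    show (e+1)+0+(e+1) = (2*e+1)+1 from by ring,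
    show (e+1)+0+e = (2*e+1) from by ring,
    show (e+2) = (e+1)+1 from by ring]
  simp only [factQ, Nat.factorial_zero]
  have hA : ((2*e+1).factorial : ℚ) ≠ 0 := by positivity
  have hB : ((e+1).factorial : ℚ) ≠ 0 := by positivity
  have hC : ((e).factorial : ℚ) ≠ 0 := by positivity
  field_simp
  push_cast
  ring

lemma keyb0' (e : ℕ) :
    4*(e+2)*(2*e+5) * mult3 (e+2) 0 (e+2)
      = 3*(3*e+5)*(3*e+7) * mult3 (e+1) 0 (e+1) + (5*e+15)*(2*e+2) * mult3 (e+1) 0 e := by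
  qify
  rw [mult3_castQ, mult3_castQ, mult3_castQ,
    show (e+2)+0+(e+2) = (2*e+1)+1+1+1 from by ring,
    show (e+1)+0+(e+1) = (2*e+1)+1 from by ring,
    show (e+1)+0+e = (2*e+1) from by ring,
    show (e+2) = (e+1)+1 from by ring]
  simp only [factQ, Nat.factorial_zero]
  have hA : ((2*e+1).factorial : ℚ) ≠ 0 := by positivity
  have hB : ((e+1).factorial : ℚ) ≠ 0 := by positivity
  have hC : ((e).factorial : ℚ) ≠ 0 := by positivity
  field_simp
  push_cast
  ring

lemma Pval_ext (d M : ℕ) (z : ℂ) (hM : d/2+1 ≤ M) :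
    Pval d d z
      = ∑ b ∈ Finset.range M, (if 2*b ≤ d then (mult3 d b (d - 2*b) : ℂ) * z ^ b else 0) := by
  rw [Pval]
  have h1 : (∑ b ∈ Finset.range (d/2+1), (mult3 d b (d - 2*b) : ℂ) * z ^ b)
      = ∑ b ∈ Finset.range (d/2+1), (if 2*b ≤ d then (mult3 d b (d - 2*b) : ℂ) * z ^ b else 0) :=
    Finset.sum_congr rfl (fun b hb => by
      rw [if_pos (by simp only [Finset.mem_range] at hb; omega)])
  rw [h1]
  exact Finset.sum_subset (Finset.range_subset_range.mpr hM) (fun b hb hnb => by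
    rw [if_neg]
    simp only [Finset.mem_range] at hb hnb
    omega)

/-- WZ-certificate function for `z = -1/3`. -/
noncomputable def G13 (d b : ℕ) : ℂ :=
  if b = 0 then 0
  else if 2*b ≤ d+1 then
    (-3 : ℂ) * ((2*d+1-b : ℕ) : ℂ) * ((mult3 d (b-1) (d+1-2*b) : ℕ) : ℂ) * (-1/3 : ℂ)^b
  else 0

/-- WZ-certificate function for `z = -1/4`. -/
noncomputable def G14 (d b : ℕ) : ℂ :=
  if b = 0 then 0
  else if 2*b ≤ d+1 then
    (-4 : ℂ) * ((5*d+2*b+8 : ℕ) : ℂ) * ((2*d+1-b : ℕ) : ℂ)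
      * ((mult3 d (b-1) (d+1-2*b) : ℕ) : ℂ) * (-1/4 : ℂ)^b
  else 0

lemma L13 (d : ℕ) (hd : 1 ≤ d) :
    ((d : ℂ)+1) * Pval (d+1) (d+1) (-1/3) = (3*(d:ℂ)+2) * Pval d d (-1/3) := by
  set N := (d+1)/2 + 1 with hN
  rw [Pval_ext (d+1) N (-1/3) (by omega), Pval_ext d N (-1/3) (by omega), ← sub_eq_zero,
    Finset.mul_sum, Finset.mul_sum, ← Finset.sum_sub_distrib]
  have key : ∀ b ∈ Finset.range N,
      ((d : ℂ)+1) * (if 2*b ≤ d+1 then (mult3 (d+1) b (d+1 - 2*b) : ℂ) * (-1/3 : ℂ) ^ b else 0)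
        - (3*(d:ℂ)+2) * (if 2*b ≤ d then (mult3 d b (d - 2*b) : ℂ) * (-1/3 : ℂ) ^ b else 0)
        = G13 d (b+1) - G13 d b := by
    intro b hb
    simp only [Finset.mem_range] at hb
    match b with
    | 0 =>
      obtain ⟨e, rfl⟩ : ∃ e, d = e+1 := ⟨d-1, by omega⟩
      rw [if_pos (by omega), if_pos (by omega)]
      simp only [G13, if_pos rfl, if_neg (Nat.one_ne_zero), if_pos (by omega : 2*1 ≤ (e+1)+1)]
      rw [show e+1+1 - 2*0 = e+2 from by omega, show e+1 - 2*0 = e+1 from by omega,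
        show 2*(e+1)+1-1 = 2*e+2 from by omega, show e+1+1-2*1 = e from by omega]
      have hk := congrArg (Nat.cast (R := ℂ)) (keyb0 e)
      push_cast at hk ⊢
      linear_combination hk
    | (c+1) =>
      rcases (by omega : 2*(c+1)+1 ≤ d ∨ 2*(c+1) = d ∨ 2*(c+1) = d+1) with h | h | h
      · obtain ⟨i, rfl⟩ : ∃ i, d = 2*c+i+3 := ⟨d-2*c-3, by omega⟩
        rw [if_pos (by omega), if_pos (by omega)]
        simp only [G13, if_neg (Nat.succ_ne_zero _), if_neg (Nat.succ_ne_zero _),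
          if_pos (by omega : 2*(c+1) ≤ (2*c+i+3)+1), if_pos (by omega : 2*(c+1+1) ≤ (2*c+i+3)+1)]
        rw [show 2*c+i+3+1 - 2*(c+1) = i+2 from by omega,
          show 2*c+i+3 - 2*(c+1) = i+1 from by omega,
          show 2*(2*c+i+3)+1-(c+1+1) = 3*c+2*i+5 from by omega,
          show c+1+1-1 = c+1 from by omega,
          show 2*c+i+3+1-2*(c+1+1) = i from by omega,
          show 2*(2*c+i+3)+1-(c+1) = 3*c+2*i+6 from by omega,
          show c+1-1 = c from by omega,
          show 2*c+i+3+1 = 2*c+i+4 from by omega]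
        have hk := congrArg (Nat.cast (R := ℂ)) (key1 c i)
        push_cast at hk ⊢
        linear_combination ((-1/3 : ℂ))^(c+1) * hk
      · obtain ⟨rfl⟩ : d = 2*c+2 := by omega
        rw [if_pos (by omega), if_pos (by omega)]
        simp only [G13, if_neg (Nat.succ_ne_zero _), if_neg (Nat.succ_ne_zero _),
          if_pos (by omega : 2*(c+1) ≤ (2*c+2)+1), if_neg (by omega : ¬ 2*(c+1+1) ≤ (2*c+2)+1)]
        rw [show 2*c+2+1 - 2*(c+1) = 1 from by omega,
          show 2*c+2 - 2*(c+1) = 0 from by omega,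
          show 2*(2*c+2)+1-(c+1) = 3*c+4 from by omega,
          show c+1-1 = c from by omega,
          show 2*c+2+1 = 2*c+3 from by omega]
        have hk := congrArg (Nat.cast (R := ℂ)) (key2 c)
        push_cast at hk ⊢
        linear_combination ((-1/3 : ℂ))^(c+1) * hk
      · obtain ⟨rfl⟩ : d = 2*c+1 := by omega
        rw [if_pos (by omega), if_neg (by omega)]
        simp only [G13, if_neg (Nat.succ_ne_zero _), if_neg (Nat.succ_ne_zero _),
          if_pos (by omega : 2*(c+1) ≤ (2*c+1)+1), if_neg (by omega : ¬ 2*(c+1+1) ≤ (2*c+1)+1)]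
        rw [show 2*c+1+1 - 2*(c+1) = 0 from by omega,
          show 2*(2*c+1)+1-(c+1) = 3*c+2 from by omega,
          show c+1-1 = c from by omega,
          show 2*c+1+1 = 2*c+2 from by omega]
        have hk := congrArg (Nat.cast (R := ℂ)) (key3 c)
        push_cast at hk ⊢
        linear_combination ((-1/3 : ℂ))^(c+1) * hk
  rw [Finset.sum_congr rfl key, Finset.sum_range_sub]
  have h0 : G13 d 0 = 0 := by simp [G13]
  have hNN : G13 d N = 0 := by
    rw [G13, if_neg (by omega), if_neg (by omega)]
  rw [h0, hNN, sub_zero]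

lemma L14 (d : ℕ) (hd : 1 ≤ d) :
    4*((d : ℂ)+1)*(2*(d:ℂ)+3) * Pval (d+1) (d+1) (-1/4)
      = 3*(3*(d:ℂ)+2)*(3*(d:ℂ)+4) * Pval d d (-1/4) := by
  set N := (d+1)/2 + 1 with hN
  rw [Pval_ext (d+1) N (-1/4) (by omega), Pval_ext d N (-1/4) (by omega), ← sub_eq_zero,
    Finset.mul_sum, Finset.mul_sum, ← Finset.sum_sub_distrib]
  have key : ∀ b ∈ Finset.range N,
      4*((d : ℂ)+1)*(2*(d:ℂ)+3)
          * (if 2*b ≤ d+1 then (mult3 (d+1) b (d+1 - 2*b) : ℂ) * (-1/4 : ℂ) ^ b else 0)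
        - 3*(3*(d:ℂ)+2)*(3*(d:ℂ)+4)
          * (if 2*b ≤ d then (mult3 d b (d - 2*b) : ℂ) * (-1/4 : ℂ) ^ b else 0)
        = G14 d (b+1) - G14 d b := by
    intro b hb
    simp only [Finset.mem_range] at hb
    match b with
    | 0 =>
      obtain ⟨e, rfl⟩ : ∃ e, d = e+1 := ⟨d-1, by omega⟩
      rw [if_pos (by omega), if_pos (by omega)]
      simp only [G14, if_pos rfl, if_neg (Nat.one_ne_zero), if_pos (by omega : 2*1 ≤ (e+1)+1)]
      rw [show e+1+1 - 2*0 = e+2 from by omega, show e+1 - 2*0 = e+1 from by omega,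
        show 2*(e+1)+1-1 = 2*e+2 from by omega, show e+1+1-2*1 = e from by omega,
        show 5*(e+1)+2*1+8 = 5*e+15 from by omega]
      have hk := congrArg (Nat.cast (R := ℂ)) (keyb0' e)
      push_cast at hk ⊢
      linear_combination hk
    | (c+1) =>
      rcases (by omega : 2*(c+1)+1 ≤ d ∨ 2*(c+1) = d ∨ 2*(c+1) = d+1) with h | h | h
      · obtain ⟨i, rfl⟩ : ∃ i, d = 2*c+i+3 := ⟨d-2*c-3, by omega⟩
        rw [if_pos (by omega), if_pos (by omega)]
        simp only [G14, if_neg (Nat.succ_ne_zero _), if_neg (Nat.succ_ne_zero _),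
          if_pos (by omega : 2*(c+1) ≤ (2*c+i+3)+1), if_pos (by omega : 2*(c+1+1) ≤ (2*c+i+3)+1)]
        rw [show 2*c+i+3+1 - 2*(c+1) = i+2 from by omega,
          show 2*c+i+3 - 2*(c+1) = i+1 from by omega,
          show 2*(2*c+i+3)+1-(c+1+1) = 3*c+2*i+5 from by omega,
          show c+1+1-1 = c+1 from by omega,
          show 2*c+i+3+1-2*(c+1+1) = i from by omega,
          show 2*(2*c+i+3)+1-(c+1) = 3*c+2*i+6 from by omega,
          show c+1-1 = c from by omega,
          show 5*(2*c+i+3)+2*(c+1+1)+8 = 12*c+5*i+27 from by omega,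
          show 5*(2*c+i+3)+2*(c+1)+8 = 12*c+5*i+25 from by omega,
          show 2*c+i+3+1 = 2*c+i+4 from by omega]
        have hk := congrArg (Nat.cast (R := ℂ)) (key1' c i)
        push_cast at hk ⊢
        linear_combination ((-1/4 : ℂ))^(c+1) * hk
      · obtain ⟨rfl⟩ : d = 2*c+2 := by omega
        rw [if_pos (by omega), if_pos (by omega)]
        simp only [G14, if_neg (Nat.succ_ne_zero _), if_neg (Nat.succ_ne_zero _),
          if_pos (by omega : 2*(c+1) ≤ (2*c+2)+1), if_neg (by omega : ¬ 2*(c+1+1) ≤ (2*c+2)+1)]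
        rw [show 2*c+2+1 - 2*(c+1) = 1 from by omega,
          show 2*c+2 - 2*(c+1) = 0 from by omega,
          show 2*(2*c+2)+1-(c+1) = 3*c+4 from by omega,
          show c+1-1 = c from by omega,
          show 5*(2*c+2)+2*(c+1)+8 = 12*c+20 from by omega,
          show 2*c+2+1 = 2*c+3 from by omega]
        have hk := congrArg (Nat.cast (R := ℂ)) (key2' c)
        push_cast at hk ⊢
        linear_combination ((-1/4 : ℂ))^(c+1) * hk
      · obtain ⟨rfl⟩ : d = 2*c+1 := by omega
        rw [if_pos (by omega), if_neg (by omega)]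
        simp only [G14, if_neg (Nat.succ_ne_zero _), if_neg (Nat.succ_ne_zero _),
          if_pos (by omega : 2*(c+1) ≤ (2*c+1)+1), if_neg (by omega : ¬ 2*(c+1+1) ≤ (2*c+1)+1)]
        rw [show 2*c+1+1 - 2*(c+1) = 0 from by omega,
          show 2*(2*c+1)+1-(c+1) = 3*c+2 from by omega,
          show c+1-1 = c from by omega,
          show 5*(2*c+1)+2*(c+1)+8 = 12*c+15 from by omega,
          show 2*c+1+1 = 2*c+2 from by omega]
        have hk := congrArg (Nat.cast (R := ℂ)) (key3' c)
        push_cast at hk ⊢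
        linear_combination ((-1/4 : ℂ))^(c+1) * hk
  rw [Finset.sum_congr rfl key, Finset.sum_range_sub]
  have h0 : G14 d 0 = 0 := by simp [G14]
  have hNN : G14 d N = 0 := by
    rw [G14, if_neg (by omega), if_neg (by omega)]
  rw [h0, hNN, sub_zero]

lemma Pval22 (z : ℂ) : Pval 2 2 z = 6 + 3*z := by
  rw [Pval]
  rw [show (2/2+1) = 2 from rfl, Finset.sum_range_succ, Finset.sum_range_succ,
    Finset.sum_range_zero]
  norm_num [show mult3 2 0 2 = 6 from rfl, show mult3 2 1 0 = 3 from rfl]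

lemma p13_ne (d : ℕ) (hd : 2 ≤ d) : Pval d d (-1/3 : ℂ) ≠ 0 := by
  induction d, hd using Nat.le_induction with
  | base =>
    rw [Pval22]
    norm_num
  | succ n hn ih =>
    intro h
    have hr := L13 n (by omega)
    rw [h, mul_zero] at hr
    have hne : (3*(n:ℂ)+2) ≠ 0 := by
      have : (3*(n:ℂ)+2) = ((3*n+2 : ℕ) : ℂ) := by push_cast; ring
      rw [this]
      exact Nat.cast_ne_zero.mpr (by omega)
    exact ih (by
      rcases mul_eq_zero.mp hr.symm with h' | h'
      · exact absurd h' hne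
      · exact h')

lemma p14_ne (d : ℕ) (hd : 2 ≤ d) : Pval d d (-1/4 : ℂ) ≠ 0 := by
  induction d, hd using Nat.le_induction with
  | base =>
    rw [Pval22]
    norm_num
  | succ n hn ih =>
    intro h
    have hr := L14 n (by omega)
    rw [h, mul_zero] at hr
    have hne : (3*(3*(n:ℂ)+2)*(3*(n:ℂ)+4)) ≠ 0 := by
      have : (3*(3*(n:ℂ)+2)*(3*(n:ℂ)+4)) = ((3*(3*n+2)*(3*n+4) : ℕ) : ℂ) := by push_cast; ring
      rw [this]
      exact Nat.cast_ne_zero.mpr (by positivity)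
    exact ih (by
      rcases mul_eq_zero.mp hr.symm with h' | h'
      · exact absurd h' hne
      · exact h')

lemma p0_ne (d : ℕ) (hd : 2 ≤ d) : Pval d d (0 : ℂ) ≠ 0 := by
  rw [Pval]
  rw [Finset.sum_eq_single_of_mem 0 (Finset.mem_range.mpr (by omega))
    (fun b _ hb => by rw [zero_pow hb, mul_zero])]
  simp only [pow_zero, mul_one, Nat.sub_zero, Nat.mul_zero]
  exact Nat.cast_ne_zero.mpr (mult3_pos d 0 d).ne'

/-- Every complex root of `p_d` avoids `0`, `-1/3` and `-1/4`. -/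
theorem stmt6 (d : ℕ) (hd : 2 ≤ d) (lam : ℂ) (h0 : Pval d d lam = 0) :
    lam ≠ 0 ∧ lam ≠ -1/3 ∧ lam ≠ -1/4 := by
  refine ⟨?_, ?_, ?_⟩ <;> rintro rfl
  · exact p0_ne d hd h0
  · exact p13_ne d hd h0
  · exact p14_ne d hd h0
end

section
/- Let R be a commutative \mathbb{Q}-algebra and let f(Y) = Y + \sum_{j \geq 1} f_j Y^{j+1} \in R[[Y]] be a formal power series with compositional inverse h(Y) = Y + \sum_{j \geq 1} h_j Y^{j+1} (so f(h(Y)) = Y). Then for every j \geq 1, h_j = \frac{1}{j+1} \sum_{\mathbf{a} \cdot \mathbb{N} = j} (-1)^{|\mathbf{a}|} \binom{|\mathbf{a}| + j}{a_1, \ldots, a_j, j} f_1^{a_1} \cdots f_j^{a_j}, where the sum is over tuples \mathbf{a} = (a_1, \ldots, a_j) of nonnegative integers with a_1 + 2a_2 + \cdots + j a_j = j and |\mathbf{a}| = a_1 + \cdots + a_j. -/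
open PowerSeries

/-- Composition `f(g(Y))` of formal power series, valid when `g` has zero constant term
(then `g^k` has order at least `k`, so the sum below computes the composition). -/
noncomputable def psComp {R : Type*} [CommRing R] (f g : PowerSeries R) : PowerSeries R :=
  PowerSeries.mk fun n => ∑ k ∈ Finset.range (n + 1), coeff k f * coeff n (g ^ k)

/-- The multinomial coefficient `(∑ aᵢ + s)! / (∏ aᵢ! * s!)`. -/
def multinom {m : ℕ} (a : Fin m → ℕ) (s : ℕ) : ℕ :=
  (∑ i, a i + s).factorial / ((∏ i, (a i).factorial) * s.factorial)

namespace Lag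
open Finset
variable {R : Type*} [CommRing R]

lemma coeff_pow_eq_zero {g : PowerSeries R} (hg : constantCoeff g = 0) {n k : ℕ}
    (h : n < k) : coeff n (g ^ k) = 0 := by
  have hdvd : (X : PowerSeries R) ^ k ∣ g ^ k :=
    pow_dvd_pow_of_dvd (X_dvd_iff.2 hg) k
  exact X_pow_dvd_iff.1 hdvd n h

lemma coeff_psComp (F g : PowerSeries R) (n : ℕ) :
    coeff n (psComp F g) = ∑ k ∈ range (n + 1), coeff k F * coeff n (g ^ k) := by
  simp [psComp]

lemma coeff_psComp_of_le {g : PowerSeries R} (hg : constantCoeff g = 0)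
    (F : PowerSeries R) {n N : ℕ} (hN : n + 1 ≤ N) :
    coeff n (psComp F g) = ∑ k ∈ range N, coeff k F * coeff n (g ^ k) := by
  rw [coeff_psComp]
  refine Finset.sum_subset (range_subset_range.2 hN) fun k _ hk => ?_
  rw [coeff_pow_eq_zero hg (by simpa using hk), mul_zero]

lemma coeff_psComp_mul_right {g : PowerSeries R} (hg : constantCoeff g = 0)
    (F u : PowerSeries R) (n : ℕ) :
    coeff n (psComp F g * u) =
      ∑ k ∈ range (n + 1), coeff k F * coeff n (g ^ k * u) := by
  rw [coeff_mul]
  have h1 : ∀ p ∈ antidiagonal n,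
      coeff p.1 (psComp F g) * coeff p.2 u =
        ∑ k ∈ range (n + 1), coeff k F * (coeff p.1 (g ^ k) * coeff p.2 u) := by
    intro p hp
    have hp1 : p.1 ≤ n := Finset.HasAntidiagonal.antidiagonal.fst_le hp
    rw [coeff_psComp_of_le hg F (by omega : p.1 + 1 ≤ n + 1), sum_mul]
    exact sum_congr rfl fun k _ => by ring
  rw [sum_congr rfl h1, Finset.sum_comm]
  refine sum_congr rfl fun k _ => ?_
  rw [coeff_mul, mul_sum]

lemma coeff_mul_congr {a a' b b' : PowerSeries R} {n : ℕ}
    (ha : ∀ m ≤ n, coeff m a = coeff m a') (hb : ∀ m ≤ n, coeff m b = coeff m b') :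
    ∀ m ≤ n, coeff m (a * b) = coeff m (a' * b') := by
  intro m hm
  rw [coeff_mul, coeff_mul]
  refine sum_congr rfl fun p hp => ?_
  have := Finset.HasAntidiagonal.mem_antidiagonal.1 hp
  rw [ha p.1 (by omega), hb p.2 (by omega)]

lemma coeff_pow_congr {a a' : PowerSeries R} {n : ℕ}
    (ha : ∀ m ≤ n, coeff m a = coeff m a') (k : ℕ) :
    ∀ m ≤ n, coeff m (a ^ k) = coeff m (a' ^ k) := by
  induction k with
  | zero => simp
  | succ k ih =>
    intro m hm
    rw [pow_succ, pow_succ]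
    exact coeff_mul_congr ih ha m hm

lemma natDegree_trunc_lt' (F : PowerSeries R) {N : ℕ} (hN : 0 < N) :
    (trunc N F).natDegree < N := by
  rcases eq_or_ne (trunc N F) 0 with h | h
  · simpa [h] using hN
  · exact Polynomial.natDegree_lt_iff_degree_lt h |>.2 (by simpa using degree_trunc_lt F N)

lemma coeff_eval₂_aux {g : PowerSeries R} (hg : constantCoeff g = 0)
    (p : Polynomial R) {n N : ℕ} (hn : n < N) (hd : p.natDegree < N) :
    coeff n (p.eval₂ C g) = ∑ k ∈ range N, p.coeff k * coeff n (g ^ k) := by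
  rw [Polynomial.eval₂_eq_sum_range' C hd g, map_sum]
  exact sum_congr rfl fun k _ => by rw [coeff_C_mul]

lemma coeff_psComp_eval₂ {g : PowerSeries R} (hg : constantCoeff g = 0)
    (F : PowerSeries R) {n N : ℕ} (hn : n < N) :
    coeff n (psComp F g) = coeff n ((trunc N F).eval₂ C g) := by
  rw [coeff_eval₂_aux hg _ hn (natDegree_trunc_lt' F (by omega)),
    coeff_psComp_of_le hg F (by omega : n + 1 ≤ N)]
  refine sum_congr rfl fun k hk => ?_
  rw [coeff_trunc, if_pos (mem_range.1 hk)]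

lemma coeff_eval₂_congr {g : PowerSeries R} (hg : constantCoeff g = 0)
    {p q : Polynomial R} {n : ℕ} (h : ∀ m ≤ n, p.coeff m = q.coeff m) :
    coeff n (p.eval₂ C g) = coeff n (q.eval₂ C g) := by
  set N := max (max p.natDegree q.natDegree) n + 1 with hN
  have hpN : p.natDegree < N := by omega
  have hqN : q.natDegree < N := by omega
  rw [coeff_eval₂_aux hg p (by omega) hpN, coeff_eval₂_aux hg q (by omega) hqN]
  refine sum_congr rfl fun k _ => ?_
  rcases le_or_gt k n with hk | hk
  · rw [h k hk]
  · rw [coeff_pow_eq_zero hg hk, mul_zero, mul_zero]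

lemma psComp_mul {g : PowerSeries R} (hg : constantCoeff g = 0) (F G : PowerSeries R) :
    psComp (F * G) g = psComp F g * psComp G g := by
  ext n
  rw [coeff_psComp_eval₂ hg (F * G) (Nat.lt_succ_self n)]
  have h1 : coeff n ((trunc (n+1) (F * G)).eval₂ C g)
      = coeff n ((trunc (n+1) F * trunc (n+1) G).eval₂ C g) := by
    refine coeff_eval₂_congr hg fun m hm => ?_
    rw [coeff_trunc, if_pos (by omega), Polynomial.coeff_mul, PowerSeries.coeff_mul]
    refine sum_congr rfl fun p hp => ?_
    have := Finset.HasAntidiagonal.mem_antidiagonal.1 hp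
    rw [coeff_trunc, coeff_trunc, if_pos (by omega), if_pos (by omega)]
  rw [h1, Polynomial.eval₂_mul]
  exact coeff_mul_congr
    (fun m hm => ((coeff_psComp_eval₂ hg F (by omega : m < n+1)).symm))
    (fun m hm => ((coeff_psComp_eval₂ hg G (by omega : m < n+1)).symm)) n le_rfl

lemma psComp_one (g : PowerSeries R) : psComp (1 : PowerSeries R) g = 1 := by
  ext n
  rw [coeff_psComp]
  rw [Finset.sum_eq_single 0]
  · simp
  · intro k _ hk
    rw [coeff_one, if_neg hk, zero_mul]
  · simp

lemma psComp_X_left {g : PowerSeries R} (hg : constantCoeff g = 0) :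
    psComp (X : PowerSeries R) g = g := by
  ext n
  rw [coeff_psComp]
  rw [Finset.sum_eq_single 1]
  · simp
  · intro k _ hk
    rw [coeff_X, if_neg hk, zero_mul]
  · intro h1
    have : n = 0 := by simpa using h1
    simp [this, coeff_X, hg]

lemma psComp_X_right (F : PowerSeries R) : psComp F (X : PowerSeries R) = F := by
  ext n
  rw [coeff_psComp]
  rw [Finset.sum_eq_single n]
  · simp [coeff_X_pow]
  · intro k _ hk
    rw [coeff_X_pow, if_neg (fun hh => hk hh.symm), mul_zero]
  · simp

lemma psComp_sub (F G g : PowerSeries R) :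
    psComp (F - G) g = psComp F g - psComp G g := by
  ext n
  rw [map_sub, coeff_psComp, coeff_psComp, coeff_psComp, ← Finset.sum_sub_distrib]
  exact Finset.sum_congr rfl fun k _ => by rw [map_sub, sub_mul]

lemma psComp_pow {g : PowerSeries R} (hg : constantCoeff g = 0) (F : PowerSeries R)
    (m : ℕ) : psComp (F ^ m) g = psComp F g ^ m := by
  induction m with
  | zero => simpa using psComp_one g
  | succ m ih => rw [pow_succ, pow_succ, psComp_mul hg, ih]

lemma constantCoeff_psComp (F g : PowerSeries R) :
    coeff 0 (psComp F g) = coeff 0 F := by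
  rw [coeff_psComp]
  simp

lemma psComp_assoc {g k : PowerSeries R} (hg : constantCoeff g = 0)
    (hk : constantCoeff k = 0) (F : PowerSeries R) :
    psComp (psComp F g) k = psComp F (psComp g k) := by
  have hgk : constantCoeff (psComp g k) = 0 := by
    rw [← coeff_zero_eq_constantCoeff, constantCoeff_psComp, coeff_zero_eq_constantCoeff, hg]
  ext n
  rw [coeff_psComp, coeff_psComp]
  have lhs : ∀ m ∈ Finset.range (n+1),
      coeff m (psComp F g) * coeff n (k ^ m)
        = ∑ i ∈ Finset.range (n+1), coeff i F * (coeff m (g ^ i) * coeff n (k ^ m)) := by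
    intro m hm
    rw [coeff_psComp_of_le hg F (show m + 1 ≤ n + 1 from Finset.mem_range.1 hm), Finset.sum_mul]
    exact Finset.sum_congr rfl fun i _ => by ring
  rw [Finset.sum_congr rfl lhs, Finset.sum_comm]
  refine Finset.sum_congr rfl fun i _ => ?_
  rw [← psComp_pow hk, coeff_psComp, Finset.mul_sum]

lemma pow_add_expand (g u : PowerSeries R) (k : ℕ) :
    ∃ E : PowerSeries R, (g + u) ^ (k + 1)
      = g ^ (k + 1) + ((k : PowerSeries R) + 1) * (g ^ k * u) + u ^ 2 * E := by
  induction k with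
  | zero => exact ⟨0, by ring⟩
  | succ k ih =>
    obtain ⟨E, hE⟩ := ih
    refine ⟨((k : PowerSeries R) + 1) * g ^ k + E * (g + u), ?_⟩
    have : (g + u) ^ (k + 2) = ((g + u) ^ (k + 1)) * (g + u) := by ring
    rw [this, hE]
    push_cast
    ring

lemma coeff_smallpow {g : PowerSeries R} (hg : constantCoeff g = 0) (k : ℕ) :
    coeff 0 (g ^ k) = if k = 0 then 1 else 0 := by
  rw [coeff_zero_eq_constantCoeff, map_pow, hg]
  cases k <;> simp

lemma coeff_psComp_perturb {g : PowerSeries R} (hg : constantCoeff g = 0)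
    (F : PowerSeries R) (r : R) {n m : ℕ} (hn : 1 ≤ n) (hm : m ≤ n) :
    coeff m (psComp F (g + C r * X ^ n))
      = coeff m (psComp F g) + (if m = n then coeff 1 F * r else 0) := by
  set u : PowerSeries R := C r * X ^ n with hu
  have key : ∀ k : ℕ, coeff m ((g + u) ^ k)
      = coeff m (g ^ k) + (if m = n ∧ k = 1 then r else 0) := by
    intro k
    cases k with
    | zero => simp
    | succ k =>
      obtain ⟨E, hE⟩ := pow_add_expand g u k
      rw [hE, map_add, map_add]
      have h2 : coeff m (u ^ 2 * E) = 0 := by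
        have : u ^ 2 * E = X ^ (2 * n) * (C r ^ 2 * E) := by
          rw [hu]; ring
        rw [this, coeff_X_pow_mul', if_neg (by omega)]
      have hmid : coeff m (((k : PowerSeries R) + 1) * (g ^ k * u))
          = if m = n ∧ k = 0 then r else 0 := by
        have hcast : ((k : PowerSeries R) + 1) = C ((k : R) + 1) := by
          simp [map_add, map_natCast]
        rw [hcast, coeff_C_mul]
        have : g ^ k * u = X ^ n * (C r * g ^ k) := by rw [hu]; ring
        rw [this, coeff_X_pow_mul']
        rcases eq_or_lt_of_le hm with hmn | hmn
        · rw [if_pos (by omega)]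
          have : m - n = 0 := by omega
          rw [this, coeff_C_mul, coeff_smallpow hg]
          rcases Nat.eq_zero_or_pos k with hk | hk
          · subst hk; simp [hmn]
          · rw [if_neg (by omega), if_neg (by omega)]
            push_cast
            ring
        · rw [if_neg (by omega), if_neg (by omega), mul_zero]
      rw [h2, hmid, add_zero]
      congr 1
      split_ifs with h1 h2 h3 <;> first | rfl | omega
  rw [coeff_psComp, coeff_psComp]
  have hsum : ∀ k ∈ Finset.range (m+1), coeff k F * coeff m ((g + u) ^ k)
      = coeff k F * coeff m (g ^ k) + (if m = n ∧ k = 1 then coeff 1 F * r else 0) := by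
    intro k _
    rw [key k]
    split_ifs with h
    · rw [h.2, mul_add]
    · simp
  rw [Finset.sum_congr rfl hsum, Finset.sum_add_distrib]
  congr 1
  rcases eq_or_ne m n with hmn | hmn
  · subst hmn
    rw [Finset.sum_eq_single 1]
    · simp
    · intro k _ hk; rw [if_neg (by tauto)]
    · intro hh; exfalso; exact hh (by simp; omega)
  · rw [if_neg hmn, Finset.sum_eq_zero]
    intro k _; rw [if_neg (by tauto)]

noncomputable def invAux (φ : PowerSeries R) : ℕ → PowerSeries R
  | 0 => 0
  | n+1 => invAux φ n +
      C (if n = 0 then 0 else if n = 1 then 1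
        else -(coeff n (psComp φ (invAux φ n)))) * X ^ n

lemma constantCoeff_invAux (φ : PowerSeries R) (n : ℕ) :
    constantCoeff (invAux φ n) = 0 := by
  induction n with
  | zero => simp [invAux]
  | succ n ih =>
    rw [invAux, map_add, ih, map_mul, map_pow, constantCoeff_X, zero_add]
    cases n <;> simp

lemma invAux_stable (φ : PowerSeries R) {m n n' : ℕ} (hm : m < n) (hn : n ≤ n') :
    coeff m (invAux φ n') = coeff m (invAux φ n) := by
  induction n' with
  | zero => omega
  | succ n' ih =>
    rcases eq_or_lt_of_le hn with h | h
    · rw [h]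
    · have hn' : n ≤ n' := by omega
      rw [invAux, map_add, coeff_C_mul, coeff_X_pow, if_neg (show m ≠ n' by omega), mul_zero,
        add_zero, ih hn']

lemma invAux_spec {φ : PowerSeries R} (hh0 : coeff 0 φ = 0) (hh1 : coeff 1 φ = 1)
    (n : ℕ) : ∀ m < n, coeff m (psComp φ (invAux φ n)) = coeff m X := by
  induction n with
  | zero => omega
  | succ n ih =>
    intro m hm
    rcases Nat.eq_zero_or_pos n with rfl | hn
    · interval_cases m
      rw [constantCoeff_psComp, hh0, coeff_zero_X]
    · have hpert := coeff_psComp_perturb (constantCoeff_invAux φ n) φ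
        (if n = 0 then 0 else if n = 1 then 1
          else -(coeff n (psComp φ (invAux φ n)))) hn (by omega : m ≤ n)
      rw [invAux, hpert]
      rcases lt_or_eq_of_le (by omega : m ≤ n) with hmn | hmn
      · rw [if_neg (by omega), add_zero]
        exact ih m hmn
      · subst hmn
        rw [if_pos rfl, hh1, one_mul]
        rcases eq_or_lt_of_le (Nat.succ_le_of_lt hn) with h1 | h1
        · have hn1 : m = 1 := by omega
          subst hn1
          have hinv1 : invAux φ 1 = 0 := by simp [invAux]
          rw [if_neg one_ne_zero, if_pos rfl, hinv1, coeff_psComp]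
          rw [Finset.sum_range_succ, Finset.sum_range_one]
          simp
        · rw [if_neg (by omega), if_neg (by omega), coeff_X, if_neg (by omega)]
          ring

noncomputable def rinv (φ : PowerSeries R) : PowerSeries R :=
  PowerSeries.mk fun m => coeff m (invAux φ (m+1))

lemma constantCoeff_rinv (φ : PowerSeries R) : constantCoeff (rinv φ) = 0 := by
  have h1 := constantCoeff_invAux φ 1
  rw [← coeff_zero_eq_constantCoeff_apply] at h1 ⊢
  rw [rinv, coeff_mk]
  exact h1

lemma psComp_rinv {φ : PowerSeries R} (hh0 : coeff 0 φ = 0) (hh1 : coeff 1 φ = 1) :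
    psComp φ (rinv φ) = X := by
  ext m
  have hagree : ∀ p ≤ m, coeff p (rinv φ) = coeff p (invAux φ (m+1)) := by
    intro p hp
    rw [rinv, coeff_mk]
    exact (invAux_stable φ (Nat.lt_succ_self p) (by omega)).symm
  rw [coeff_psComp, ← invAux_spec hh0 hh1 (m+1) m (Nat.lt_succ_self m), coeff_psComp]
  refine Finset.sum_congr rfl fun k _ => ?_
  rw [coeff_pow_congr hagree k m le_rfl]

lemma psComp_flip {f φ : PowerSeries R} (hf0 : coeff 0 f = 0)
    (hh0 : coeff 0 φ = 0) (hh1 : coeff 1 φ = 1)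
    (hinv : psComp f φ = X) : psComp φ f = X := by
  have hk0 : constantCoeff (rinv φ) = 0 := constantCoeff_rinv φ
  have hk : psComp φ (rinv φ) = X := psComp_rinv hh0 hh1
  have hfk : f = rinv φ := by
    calc f = psComp f X := (psComp_X_right f).symm
    _ = psComp f (psComp φ (rinv φ)) := by rw [hk]
    _ = psComp (psComp f φ) (rinv φ) := (psComp_assoc (by rw [← coeff_zero_eq_constantCoeff_apply]; exact hh0) hk0 f).symm
    _ = psComp X (rinv φ) := by rw [hinv]
    _ = rinv φ := psComp_X_left hk0
  rw [hfk, hk]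

lemma derivative_psComp {g : PowerSeries R} (hg : constantCoeff g = 0) (F : PowerSeries R) :
    d⁄dX R (psComp F g) = psComp (d⁄dX R F) g * d⁄dX R g := by
  ext n
  rw [coeff_derivative, coeff_psComp_of_le hg F (show (n+1)+1 ≤ n+2 from le_rfl),
    coeff_psComp_mul_right hg, Finset.sum_mul, Finset.sum_range_succ']
  have h0 : coeff 0 F * coeff (n+1) ((g : PowerSeries R) ^ 0) * ((n : R) + 1) = 0 := by
    rw [pow_zero, coeff_one, if_neg (Nat.succ_ne_zero n), mul_zero, zero_mul]
  rw [h0, add_zero]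
  refine Finset.sum_congr rfl fun k _ => ?_
  have key : ((k : R) + 1) * coeff n (g ^ k * d⁄dX R g)
      = coeff (n+1) (g ^ (k+1)) * ((n : R) + 1) := by
    have h1 := coeff_derivative (g ^ (k+1)) n
    rw [Derivation.leibniz_pow, Nat.add_sub_cancel, map_nsmul, smul_eq_mul] at h1
    rw [nsmul_eq_mul] at h1
    push_cast at h1
    linear_combination h1
  rw [coeff_derivative]
  push_cast
  linear_combination (-(coeff (k+1) F)) * key

section QAlg
variable [Algebra ℚ R]

lemma natCast_cancel {k : ℕ} (hk : 1 ≤ k) {x : R} (h : (k : R) * x = 0) : x = 0 := by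
  have hq : (k : ℚ) ≠ 0 := by positivity
  have h2 : algebraMap ℚ R ((k:ℚ)⁻¹) * ((k:R) * x) = x := by
    rw [← mul_assoc, show ((k:R)) = algebraMap ℚ R (k:ℚ) by simp, ← map_mul,
      inv_mul_cancel₀ hq, map_one, one_mul]
  rw [h, mul_zero] at h2
  exact h2.symm

lemma coeff_unit_deriv {w W : PowerSeries R} (hwW : w * W = 1) (m : ℕ) :
    coeff (m+1) ((w + X * d⁄dX R w) * W ^ (m+2)) = 0 := by
  have hd1 : w * d⁄dX R W + W * d⁄dX R w = 0 := by
    have h0 := congrArg (d⁄dX R) hwW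
    rw [Derivation.leibniz, Derivation.map_one_eq_zero, smul_eq_mul, smul_eq_mul] at h0
    exact h0
  have hdW : d⁄dX R W = -(W^2 * d⁄dX R w) := by
    calc d⁄dX R W = (w * W) * d⁄dX R W := by rw [hwW, one_mul]
      _ = W * (w * d⁄dX R W) := by ring
      _ = W * (-(W * d⁄dX R w)) := by rw [show w * d⁄dX R W = -(W * d⁄dX R w) by
            linear_combination hd1]
      _ = -(W^2 * d⁄dX R w) := by ring
  have hexp : (w + X * d⁄dX R w) * W^(m+2) = W^(m+1) + X * (W^(m+2) * d⁄dX R w) := by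
    calc (w + X * d⁄dX R w) * W^(m+2)
        = (w*W) * W^(m+1) + X * (W^(m+2) * d⁄dX R w) := by ring
      _ = W^(m+1) + X * (W^(m+2) * d⁄dX R w) := by rw [hwW, one_mul]
  rw [hexp, map_add, coeff_succ_X_mul]
  have hd2 : d⁄dX R (W^(m+1)) = -((m+1 : ℕ) • (W^(m+2) * d⁄dX R w)) := by
    rw [Derivation.leibniz_pow, Nat.add_sub_cancel, hdW, smul_eq_mul, nsmul_eq_mul,
      nsmul_eq_mul]
    push_cast
    ring
  have hd3 := coeff_derivative (W^(m+1)) m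
  rw [hd2, map_neg, map_nsmul, nsmul_eq_mul] at hd3
  apply natCast_cancel (show 1 ≤ m+1 by omega)
  push_cast at hd3 ⊢
  linear_combination -hd3

end QAlg

section QAlg2
variable [Algebra ℚ R]

lemma coeff_zero_mul' (a b : PowerSeries R) :
    coeff 0 (a * b) = coeff 0 a * coeff 0 b := by
  simp only [coeff_zero_eq_constantCoeff_apply, map_mul]

lemma key_E2 {f h : PowerSeries R} (hf0 : coeff 0 f = 0) (hf1 : coeff 1 f = 1)
    (hh0 : coeff 0 h = 0) (hh1 : coeff 1 h = 1) (hinv : psComp f h = X)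
    {w W : PowerSeries R} (hw : f = X * w) (hwW : w * W = 1) (j : ℕ) (hj : 1 ≤ j) :
    coeff j (W ^ (j+1)) = coeff (j+1) h * ((j : R) + 1) := by
  have hf0' : constantCoeff f = 0 := by rw [← coeff_zero_eq_constantCoeff_apply]; exact hf0
  have hcomp : psComp h f = X := psComp_flip hf0 hh0 hh1 hinv
  have hder : psComp (d⁄dX R h) f * d⁄dX R f = 1 := by
    have hd := derivative_psComp hf0' h
    rw [hcomp, derivative_X] at hd
    exact hd.symm
  have hW0 : coeff 0 W = 1 := by
    have hc := congrArg (coeff 0) hwW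
    rw [coeff_zero_mul'] at hc
    have hw0 : coeff 0 w = 1 := by
      have := coeff_succ_X_mul 0 w
      rw [← hw] at this
      rw [← this]; exact hf1
    rw [hw0, one_mul] at hc
    simpa using hc
  have hdf : d⁄dX R f = w + X * d⁄dX R w := by
    rw [hw, Derivation.leibniz, derivative_X, smul_eq_mul, smul_eq_mul, mul_one, add_comm]
  have hpow : ∀ m, m ≤ j + 1 → w ^ m * W ^ (j+1) = W ^ (j+1-m) := by
    intro m hm
    have h1 : w ^ m * W ^ m = 1 := by rw [← mul_pow, hwW, one_pow]
    have h2 : W ^ (j+1) = W ^ m * W ^ (j+1-m) := by rw [← pow_add]; congr 1; omega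
    rw [h2, ← mul_assoc, h1, one_mul]
  have h1 : psComp (d⁄dX R h) f * (d⁄dX R f * W^(j+1)) = W^(j+1) := by
    rw [← mul_assoc, hder, one_mul]
  have h2 := congrArg (coeff j) h1
  rw [coeff_psComp_mul_right hf0'] at h2
  rw [← h2]
  have hform : ∀ m, m ≤ j → f ^ m * (d⁄dX R f * W^(j+1))
      = X ^ m * ((w + X * d⁄dX R w) * W ^ (j+1-m)) := by
    intro m hm
    calc f ^ m * (d⁄dX R f * W^(j+1))
        = X ^ m * (d⁄dX R f * (w ^ m * W ^ (j+1))) := by rw [hw, mul_pow]; ring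
      _ = X ^ m * ((w + X * d⁄dX R w) * W ^ (j+1-m)) := by
          rw [hpow m (by omega), hdf]
  rw [Finset.sum_eq_single j]
  · have hform' := hform j le_rfl
    have hjj : j + 1 - j = 1 := by omega
    rw [hform', hjj, pow_one]
    have : coeff j ((X:PowerSeries R) ^ j * ((w + X * d⁄dX R w) * W)) =
        coeff 0 ((w + X * d⁄dX R w) * W) := by
      have := coeff_X_pow_mul ((w + X * d⁄dX R w) * W) j 0
      simpa using this
    rw [this, coeff_zero_mul', hW0, mul_one, map_add, coeff_zero_mul']
    have hdw0 : coeff 0 (d⁄dX R f) = 1 := by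
      rw [coeff_derivative]
      simpa using hf1
    rw [hdf, map_add] at hdw0
    rw [coeff_derivative h j]
    push_cast
    calc coeff (j+1) h * ((j:R)+1) * (coeff 0 w + coeff 0 X * coeff 0 (d⁄dX R w))
        = coeff (j+1) h * ((j:R)+1) * (coeff 0 w + coeff 0 (X * d⁄dX R w)) := by
          rw [coeff_zero_mul']
      _ = coeff (j+1) h * ((j:R)+1) := by rw [hdw0]; ring
  · intro m hmr hmj
    have hm : m ≤ j := by have := Finset.mem_range.1 hmr; omega
    have hm' : m < j := by omega
    obtain ⟨t, ht⟩ : ∃ t, j - m = t + 1 := ⟨j - m - 1, by omega⟩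
    rw [hform m hm]
    have hco : coeff j ((X:PowerSeries R) ^ m * ((w + X * d⁄dX R w) * W ^ (j+1-m)))
        = coeff (j-m) ((w + X * d⁄dX R w) * W ^ (j+1-m)) := by
      have := coeff_X_pow_mul ((w + X * d⁄dX R w) * W ^ (j+1-m)) m (j - m)
      rw [show j - m + m = j by omega] at this
      exact this
    rw [hco, ht, show j + 1 - m = t + 2 by omega, coeff_unit_deriv hwW t, mul_zero]
  · intro hj'
    exfalso
    exact hj' (Finset.mem_range.2 (by omega))

end QAlg2
lemma key_E4 {g W : PowerSeries R} (hg0 : constantCoeff g = 0)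
    (hwW : (1 + g) * W = 1) (j : ℕ) :
    coeff j (W ^ (j+1))
      = ∑ k ∈ Finset.range (j+1), (Nat.choose (j+k) j : R) * ((-1 : R)^k * coeff j (g^k)) := by
  have hgc : constantCoeff (-g) = 0 := by rw [map_neg, hg0, neg_zero]
  set V : PowerSeries R := ((invOneSubPow R (j+1) : (PowerSeries R)ˣ) : PowerSeries R) with hVdef
  have hV : ((1 : PowerSeries R) - X)^(j+1) * V = 1 := by
    have h1 := (invOneSubPow R (j+1)).inv_val
    rw [invOneSubPow_inv_eq_one_sub_pow] at h1
    exact h1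
  have happ := congrArg (fun t => psComp t (-g)) hV
  simp only [psComp_mul hgc, psComp_pow hgc, psComp_sub, psComp_one, psComp_X_left hgc]
    at happ
  have hsub : (1 : PowerSeries R) - -g = 1 + g := by ring
  rw [hsub] at happ
  have hup : (1+g)^(j+1) * W^(j+1) = 1 := by rw [← mul_pow, hwW, one_pow]
  have hWV : W^(j+1) = psComp V (-g) := by
    calc W^(j+1) = W^(j+1) * ((1+g)^(j+1) * psComp V (-g)) := by rw [happ, mul_one]
      _ = ((1+g)^(j+1) * W^(j+1)) * psComp V (-g) := by ring
      _ = psComp V (-g) := by rw [hup, one_mul]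
  rw [hWV, coeff_psComp]
  refine Finset.sum_congr rfl fun k _ => ?_
  have hVco : coeff k V = (Nat.choose (j+k) j : R) := by
    rw [hVdef, invOneSubPow_val_succ_eq_mk_add_choose, coeff_mk]
  have hneg : coeff j ((-g)^k) = (-1:R)^k * coeff j (g^k) := by
    have hc : ((-1 : PowerSeries R)) = C (-1) := by simp
    rw [neg_pow, hc, ← map_pow, coeff_C_mul]
  rw [hVco, hneg]


lemma coeff_g_eq (f : PowerSeries R) (j : ℕ) :
    ∀ m ≤ j, coeff m (PowerSeries.mk fun n => if n = 0 then 0 else coeff (n+1) f)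
      = coeff m (∑ i : Fin j, C (coeff ((i:ℕ)+2) f) * X^((i:ℕ)+1)) := by
  intro m hm
  rw [coeff_mk, map_sum]
  simp only [coeff_C_mul, coeff_X_pow]
  cases m with
  | zero =>
    rw [if_pos rfl, Finset.sum_eq_zero]
    intro i _
    rw [if_neg (by omega), mul_zero]
  | succ p =>
    rw [if_neg (by omega), Finset.sum_eq_single (⟨p, by omega⟩ : Fin j)]
    · simp
    · intro i _ hi
      have hne : ¬(p + 1 = (i:ℕ) + 1) := by
        intro hc
        exact hi (Fin.val_injective (show (i:ℕ) = p by omega))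
      rw [if_neg hne, mul_zero]
    · intro hc
      exact absurd (Finset.mem_univ _) hc

lemma prod_C_X_pow (j : ℕ) (c : Fin j → R) (a : Fin j → ℕ) :
    ∏ i : Fin j, (C (c i) * X^((i:ℕ)+1)) ^ (a i)
      = C (∏ i : Fin j, c i ^ a i) * X ^ (∑ i : Fin j, ((i:ℕ)+1) * a i) := by
  rw [map_prod, ← Finset.prod_pow_eq_pow_sum, ← Finset.prod_mul_distrib]
  refine Finset.prod_congr rfl fun i _ => ?_
  rw [mul_pow, ← map_pow, ← pow_mul]

lemma coeff_gP_pow (f : PowerSeries R) (j k : ℕ) :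
    coeff j ((∑ i : Fin j, C (coeff ((i:ℕ)+2) f) * X^((i:ℕ)+1)) ^ k)
      = ∑ a ∈ Finset.piAntidiag Finset.univ k,
          (Nat.multinomial Finset.univ a : R) *
            (if ∑ i : Fin j, ((i:ℕ)+1) * a i = j
              then ∏ i : Fin j, (coeff ((i:ℕ)+2) f) ^ a i else 0) := by
  rw [Finset.sum_pow_eq_sum_piAntidiag, map_sum]
  refine Finset.sum_congr rfl fun a _ => ?_
  rw [prod_C_X_pow]
  have hcast : ((Nat.multinomial Finset.univ a : PowerSeries R))
      = C ((Nat.multinomial Finset.univ a : R)) := by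
    rw [map_natCast]
  rw [hcast, ← mul_assoc, ← map_mul, coeff_C_mul, coeff_X_pow]
  by_cases hc : (∑ i : Fin j, ((i:ℕ)+1) * a i) = j
  · rw [if_pos hc.symm, if_pos hc, mul_one]
  · rw [if_neg (fun hh => hc hh.symm), if_neg hc, mul_zero, mul_zero]

lemma multinom_eq (j : ℕ) (a : Fin j → ℕ) :
    multinom a j = Nat.choose (j + ∑ i, a i) j * Nat.multinomial Finset.univ a := by
  have hspec := Nat.multinomial_spec Finset.univ a
  unfold multinom
  refine Nat.div_eq_of_eq_mul_left ?_ ?_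
  · positivity
  · calc (∑ i, a i + j).factorial = (j + ∑ i, a i).factorial := by rw [add_comm]
      _ = Nat.choose (j + ∑ i, a i) j * j.factorial * (∑ i, a i).factorial := by
          rw [← Nat.choose_mul_factorial_mul_factorial (Nat.le_add_right j _)]
          congr 2
          omega
      _ = Nat.choose (j + ∑ i, a i) j * Nat.multinomial Finset.univ a
            * ((∏ i, (a i).factorial) * j.factorial) := by
          rw [← hspec]
          ring

end Lag


/-- Lagrange inversion: if `f(Y) = Y + ∑_{j≥1} f_j Y^{j+1}` has compositional inverse
`h(Y) = Y + ∑_{j≥1} h_j Y^{j+1}` over a commutative `ℚ`-algebra `R`, then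
`h_j = (1/(j+1)) ∑_{a·ℕ = j} (-1)^{|a|} (|a|+j choose a, j) f_1^{a_1} ⋯ f_j^{a_j}`. -/
theorem stmt8 {R : Type*} [CommRing R] [Algebra ℚ R] (f h : PowerSeries R)
    (hf0 : coeff 0 f = 0) (hf1 : coeff 1 f = 1)
    (hh0 : coeff 0 h = 0) (hh1 : coeff 1 h = 1)
    (hinv : psComp f h = PowerSeries.X) (j : ℕ) (hj : 1 ≤ j) :
    coeff (j + 1) h =
      (((j : ℚ) + 1)⁻¹) •
        Finset.sum
          (((Fintype.piFinset fun _ : Fin j => Finset.range (j + 1)).filter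
            (fun a : Fin j → ℕ => ∑ i : Fin j, ((i : ℕ) + 1) * a i = j)))
          (fun a : Fin j → ℕ =>
            (-1 : R) ^ (∑ i, a i) * (multinom a j : R) *
              ∏ i : Fin j, (coeff ((i : ℕ) + 2) f) ^ a i) := by
  classical
  set g : PowerSeries R := PowerSeries.mk fun n => if n = 0 then 0 else coeff (n+1) f
    with hgdef
  have hg0 : constantCoeff g = 0 := by
    rw [← coeff_zero_eq_constantCoeff_apply, hgdef, coeff_mk, if_pos rfl]
  set w : PowerSeries R := 1 + g with hwdef
  have hw : f = X * w := by
    ext n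
    cases n with
    | zero =>
      rw [hf0]
      have : coeff 0 ((X : PowerSeries R) * w) = 0 := by
        rw [coeff_zero_eq_constantCoeff_apply, map_mul, constantCoeff_X, zero_mul]
      rw [this]
    | succ n =>
      rw [coeff_succ_X_mul, hwdef, map_add, hgdef, coeff_mk]
      cases n with
      | zero => simp [hf1]
      | succ p => simp
  have hcw : constantCoeff w = 1 := by rw [hwdef, map_add, hg0, map_one, add_zero]
  set W := invOfUnit w 1 with hWdef
  have hwW : w * W = 1 := mul_invOfUnit w 1 (by rw [hcw, Units.val_one])
  have E2 := Lag.key_E2 hf0 hf1 hh0 hh1 hinv hw hwW j hj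
  have E4 := Lag.key_E4 hg0 (by rw [← hwdef]; exact hwW) j
  have hgp : ∀ k, coeff j (g ^ k)
      = ∑ a ∈ Finset.piAntidiag Finset.univ k,
          (Nat.multinomial Finset.univ a : R) *
            (if ∑ i : Fin j, ((i:ℕ)+1) * a i = j
              then ∏ i : Fin j, (coeff ((i:ℕ)+2) f) ^ a i else 0) := by
    intro k
    rw [Lag.coeff_pow_congr (Lag.coeff_g_eq f j) k j le_rfl, Lag.coeff_gP_pow]
  have hstep : ∀ k ∈ Finset.range (j+1),
      (Nat.choose (j+k) j : R) * ((-1:R)^k * coeff j (g^k))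
        = ∑ a ∈ (Finset.piAntidiag Finset.univ k).filter
            (fun a : Fin j → ℕ => ∑ i : Fin j, ((i:ℕ)+1) * a i = j),
            ((-1 : R) ^ (∑ i, a i) * (multinom a j : R) *
              ∏ i : Fin j, (coeff ((i : ℕ) + 2) f) ^ a i) := by
    intro k _
    rw [hgp k, Finset.sum_filter, Finset.mul_sum, Finset.mul_sum]
    refine Finset.sum_congr rfl fun a ha => ?_
    have hak : ∑ i, a i = k := by
      have := (Finset.mem_piAntidiag.1 ha).1
      simpa using this
    by_cases hc : (∑ i : Fin j, ((i:ℕ)+1) * a i) = j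
    · rw [if_pos hc, if_pos hc, ← hak, Lag.multinom_eq, Nat.cast_mul]
      ring
    · rw [if_neg hc, if_neg hc, mul_zero, mul_zero, mul_zero]
  rw [Finset.sum_congr rfl hstep] at E4
  set A := ((Fintype.piFinset fun _ : Fin j => Finset.range (j + 1)).filter
      (fun a : Fin j → ℕ => ∑ i : Fin j, ((i : ℕ) + 1) * a i = j)) with hAdef
  set G := (fun a : Fin j → ℕ =>
      (-1 : R) ^ (∑ i, a i) * (multinom a j : R) *
        ∏ i : Fin j, (coeff ((i : ℕ) + 2) f) ^ a i) with hGdef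
  have hmaps : ∀ a ∈ A, (∑ i, a i) ∈ Finset.range (j+1) := by
    intro a ha
    have hc : ∑ i : Fin j, ((i : ℕ) + 1) * a i = j := (Finset.mem_filter.1 ha).2
    have : (∑ i, a i) ≤ j := by
      calc ∑ i, a i ≤ ∑ i : Fin j, ((i:ℕ)+1) * a i :=
            Finset.sum_le_sum (fun i _ => Nat.le_mul_of_pos_left _ (by omega))
        _ = j := hc
    exact Finset.mem_range.2 (by omega)
  have hfib := Finset.sum_fiberwise_of_maps_to hmaps G
  have hsets : ∀ k, A.filter (fun a => ∑ i, a i = k)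
      = (Finset.piAntidiag Finset.univ k).filter
          (fun a : Fin j → ℕ => ∑ i : Fin j, ((i:ℕ)+1) * a i = j) := by
    intro k
    rw [hAdef]
    ext a
    constructor
    · intro hmem
      rcases Finset.mem_filter.1 hmem with ⟨hA, hsum⟩
      rcases Finset.mem_filter.1 hA with ⟨hpi, hcond⟩
      refine Finset.mem_filter.2
        ⟨Finset.mem_piAntidiag.2 ⟨by simpa using hsum, fun i _ => Finset.mem_univ i⟩, hcond⟩
    · intro hmem
      rcases Finset.mem_filter.1 hmem with ⟨hpa, hcond⟩
      have hsum : ∑ i, a i = k := by simpa using (Finset.mem_piAntidiag.1 hpa).1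
      refine Finset.mem_filter.2
        ⟨Finset.mem_filter.2 ⟨Fintype.mem_piFinset.2 fun i => ?_, hcond⟩, hsum⟩
      refine Finset.mem_range.2 ?_
      have h1 : a i ≤ ((i:ℕ)+1) * a i := Nat.le_mul_of_pos_left _ (by omega)
      have h2 : ((i:ℕ)+1) * a i ≤ ∑ i' : Fin j, ((i':ℕ)+1) * a i' :=
        Finset.single_le_sum (f := fun i' : Fin j => ((i':ℕ)+1) * a i')
          (fun _ _ => Nat.zero_le _) (Finset.mem_univ i)
      omega
  have hEA : coeff j (W ^ (j+1)) = ∑ a ∈ A, G a := by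
    rw [E4, ← hfib]
    exact Finset.sum_congr rfl fun k hk => by rw [hsets k]
  have hS : ∑ a ∈ A, G a = coeff (j+1) h * ((j:R)+1) := by rw [← hEA, E2]
  rw [hS]
  have hq : ((j:ℚ)+1) ≠ 0 := by positivity
  have hsm : coeff (j+1) h * ((j:R)+1) = ((j:ℚ)+1) • coeff (j+1) h := by
    rw [Algebra.smul_def, map_add, map_natCast, map_one, mul_comm]
  rw [hsm, smul_smul, inv_mul_cancel₀ hq, one_smul]
end

section
/- For d \geq 2, as an identity of rational functions in z over \mathbb{Q}(d) (valid for each fixed integer d \geq 2), the determinant D = P_{d+1,d-1} P_{d+2,d-1} - P_{d+1,d-2} P_{d+2,d} satisfies D = \frac{(d+1) P_{d+1,d+1}^2}{2(d+2) z (1+3z)} - \frac{3d(3d+2)(3d+4) z P_{d,d}^2}{2(d+1)^2 (d+2)(1+3z)(1+4z)} - \frac{(2 + 8z + d(2d+3)(2+9z)) P_{d,d} P_{d+1,d+1}}{2(d+1)(d+2) z (1+3z)(1+4z)}. -/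
/-- Auxiliary coefficient: `gg k n b = C(k+n-b, k) * C(n-b, b)`. -/
def gg (k n b : ℕ) : ℕ := (k + n - b).choose k * ((n - b).choose b)

lemma gg_vanish (k n b : ℕ) (h : n < 2 * b) : gg k n b = 0 := by
  unfold gg
  rw [Nat.choose_eq_zero_of_lt (show n - b < b by omega), mul_zero]

lemma mult3_eq (a b c : ℕ) : mult3 a b c = (a + b + c).choose a * ((b + c).choose b) := by
  have h1 : (a + b + c).choose a * a.factorial * (b + c).factorial = (a + b + c).factorial := by
    have := Nat.choose_mul_factorial_mul_factorial (Nat.le_add_right a (b + c))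
    rwa [show a + (b + c) - a = b + c by omega, show a + (b + c) = a + b + c by omega] at this
  have h2 : (b + c).choose b * b.factorial * c.factorial = (b + c).factorial := by
    have := Nat.choose_mul_factorial_mul_factorial (Nat.le_add_right b c)
    rwa [show b + c - b = c by omega] at this
  have key : (a + b + c).factorial
      = ((a + b + c).choose a * ((b + c).choose b)) * (a.factorial * b.factorial * c.factorial) := by
    rw [← h1, ← h2]; ring
  unfold mult3
  exact Nat.div_eq_of_eq_mul_left
    (Nat.mul_pos (Nat.mul_pos a.factorial_pos b.factorial_pos) c.factorial_pos) key

lemma Pval_eq (k n N : ℕ) (hN : n + 1 ≤ N) (z : ℂ) :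
    Pval k n z = ∑ b ∈ Finset.range N, (gg k n b : ℂ) * z ^ b := by
  unfold Pval
  rw [Finset.sum_congr rfl (fun b hb => ?_)]
  · apply Finset.sum_subset (Finset.range_subset_range.mpr (by omega))
    intro x _ hnx
    have hxx : n / 2 + 1 ≤ x := by
      by_contra hc
      exact hnx (Finset.mem_range.mpr (by omega))
    rw [gg_vanish k n x (by omega)]
    simp
  · have hb' : 2 * b ≤ n := by have := Finset.mem_range.mp hb; omega
    have : mult3 k b (n - 2 * b) = gg k n b := by
      rw [mult3_eq]; unfold gg
      rw [show k + b + (n - 2 * b) = k + n - b by omega,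
          show b + (n - 2 * b) = n - b by omega]
    rw [this]

lemma keyR1 (k n b : ℕ) (hb : b ≤ n + 1) :
    gg (k+1) (n+2) (b+1) = gg k (n+2) (b+1) + gg (k+1) (n+1) (b+1) + gg (k+1) n b := by
  rcases Nat.lt_or_ge b (n+1) with h | h
  · obtain ⟨a, rfl⟩ : ∃ a, n = b + a := ⟨n - b, by omega⟩
    unfold gg
    rw [show k+1+(b+a+2)-(b+1) = k+a+2 by omega, show (b+a+2)-(b+1) = a+1 by omega,
        show k+(b+a+2)-(b+1) = k+a+1 by omega, show k+1+(b+a+1)-(b+1) = k+a+1 by omega,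
        show (b+a+1)-(b+1) = a by omega, show k+1+(b+a)-b = k+a+1 by omega,
        show (b+a)-b = a by omega,
        show k+a+2 = (k+a+1)+1 by omega, Nat.choose_succ_succ (k+a+1) k,
        Nat.choose_succ_succ a b]
    ring
  · have hb' : b = n + 1 := by omega
    subst hb'
    rw [gg_vanish (k+1) (n+2) (n+2) (by omega), gg_vanish k (n+2) (n+2) (by omega),
        gg_vanish (k+1) (n+1) (n+2) (by omega), gg_vanish (k+1) n (n+1) (by omega)]

lemma keyR2C (k n b : ℕ) (hb : b ≤ n + 1) :
    ((n:ℂ)+2) * (gg k (n+2) (b+1) : ℂ)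
      = ((k:ℂ)+1) * (gg (k+1) (n+1) (b+1) : ℂ) + 2*((k:ℂ)+1) * (gg (k+1) n b : ℂ) := by
  rcases Nat.lt_or_ge b (n+1) with h | h
  · obtain ⟨a, rfl⟩ : ∃ a, n = b + a := ⟨n - b, by omega⟩
    unfold gg
    rw [show k+(b+a+2)-(b+1) = k+a+1 by omega, show (b+a+2)-(b+1) = a+1 by omega,
        show k+1+(b+a+1)-(b+1) = k+a+1 by omega, show (b+a+1)-(b+1) = a by omega,
        show k+1+(b+a)-b = k+a+1 by omega, show (b+a)-b = a by omega]
    have f1 : (k+a+1).choose (k+1) * (k+1) = (k+a+1).choose k * (a+1) := by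
      have := Nat.choose_succ_right_eq (k+a+1) k
      rwa [show k+a+1-k = a+1 by omega] at this
    have f2 : (a+1) * (a.choose b) = (a+1).choose (b+1) * (b+1) := Nat.add_one_mul_choose_eq a b
    have f3 : (a+1).choose (b+1) = a.choose b + a.choose (b+1) := Nat.choose_succ_succ a b
    have f1' : ((k+a+1).choose (k+1) : ℂ) * ((k:ℂ)+1)
        = ((k+a+1).choose k : ℂ) * ((a:ℂ)+1) := by exact_mod_cast f1
    have f2' : ((a:ℂ)+1) * ((a.choose b : ℕ) : ℂ)
        = (((a+1).choose (b+1) : ℕ) : ℂ) * ((b:ℂ)+1) := by exact_mod_cast f2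
    have f3' : (((a+1).choose (b+1) : ℕ) : ℂ)
        = ((a.choose b : ℕ) : ℂ) + ((a.choose (b+1) : ℕ) : ℂ) := by exact_mod_cast f3
    push_cast
    linear_combination (-(((a.choose (b+1) : ℕ) : ℂ) + 2*((a.choose b : ℕ) : ℂ))) * f1'
      + (((a:ℂ)+1) * (((k+a+1).choose k : ℕ) : ℂ)) * f3'
      - ((((k+a+1).choose k : ℕ) : ℂ)) * f2'
  · have hb' : b = n + 1 := by omega
    subst hb'
    rw [gg_vanish k (n+2) (n+2) (by omega), gg_vanish (k+1) (n+1) (n+2) (by omega),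
        gg_vanish (k+1) n (n+1) (by omega)]
    simp

lemma R1 (k n : ℕ) (z : ℂ) :
    Pval k (n+2) z = Pval (k+1) (n+2) z - Pval (k+1) (n+1) z - z * Pval (k+1) n z := by
  rw [Pval_eq k (n+2) (n+3) (by omega) z, Pval_eq (k+1) (n+2) (n+3) (by omega) z,
      Pval_eq (k+1) (n+1) (n+3) (by omega) z, Pval_eq (k+1) n (n+2) (by omega) z,
      Finset.sum_range_succ' (fun b => (gg k (n+2) b : ℂ) * z ^ b) (n+2),
      Finset.sum_range_succ' (fun b => (gg (k+1) (n+2) b : ℂ) * z ^ b) (n+2),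
      Finset.sum_range_succ' (fun b => (gg (k+1) (n+1) b : ℂ) * z ^ b) (n+2)]
  have hterm : ∑ i ∈ Finset.range (n+2), (gg k (n+2) (i+1) : ℂ) * z ^ (i+1)
      = (∑ i ∈ Finset.range (n+2), (gg (k+1) (n+2) (i+1) : ℂ) * z ^ (i+1))
        - (∑ i ∈ Finset.range (n+2), (gg (k+1) (n+1) (i+1) : ℂ) * z ^ (i+1))
        - z * ∑ i ∈ Finset.range (n+2), (gg (k+1) n i : ℂ) * z ^ i := by
    rw [Finset.mul_sum, ← Finset.sum_sub_distrib, ← Finset.sum_sub_distrib]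
    refine Finset.sum_congr rfl fun i hi => ?_
    have hb : i ≤ n + 1 := by have := Finset.mem_range.mp hi; omega
    have hkey : ((gg (k+1) (n+2) (i+1) : ℕ) : ℂ)
        = ((gg k (n+2) (i+1) : ℕ) : ℂ) + ((gg (k+1) (n+1) (i+1) : ℕ) : ℂ)
          + ((gg (k+1) n i : ℕ) : ℂ) := by exact_mod_cast keyR1 k n i hb
    linear_combination (-(z^(i+1))) * hkey
  have h0 : ((gg (k+1) (n+2) 0 : ℕ) : ℂ)
      = ((gg k (n+2) 0 : ℕ) : ℂ) + ((gg (k+1) (n+1) 0 : ℕ) : ℂ) := by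
    have hn : gg (k+1) (n+2) 0 = gg k (n+2) 0 + gg (k+1) (n+1) 0 := by
      unfold gg
      simp only [Nat.sub_zero, Nat.choose_zero_right, mul_one]
      rw [show k+1+(n+2) = (k+(n+2))+1 by omega, show k+1+(n+1) = k+(n+2) by omega]
      exact Nat.choose_succ_succ (k+(n+2)) k
    exact_mod_cast hn
  linear_combination hterm - h0

lemma R2 (k n : ℕ) (z : ℂ) :
    ((n:ℂ)+2) * Pval k (n+2) z
      = ((k:ℂ)+1) * (Pval (k+1) (n+1) z + 2 * z * Pval (k+1) n z) := by
  rw [Pval_eq k (n+2) (n+3) (by omega) z, Pval_eq (k+1) (n+1) (n+3) (by omega) z,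
      Pval_eq (k+1) n (n+2) (by omega) z,
      Finset.sum_range_succ' (fun b => (gg k (n+2) b : ℂ) * z ^ b) (n+2),
      Finset.sum_range_succ' (fun b => (gg (k+1) (n+1) b : ℂ) * z ^ b) (n+2)]
  have hterm : ((n:ℂ)+2) * ∑ i ∈ Finset.range (n+2), (gg k (n+2) (i+1) : ℂ) * z ^ (i+1)
      = ((k:ℂ)+1) * (∑ i ∈ Finset.range (n+2), (gg (k+1) (n+1) (i+1) : ℂ) * z ^ (i+1))
        + 2*((k:ℂ)+1)*z * ∑ i ∈ Finset.range (n+2), (gg (k+1) n i : ℂ) * z ^ i := by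
    rw [Finset.mul_sum, Finset.mul_sum, Finset.mul_sum, ← Finset.sum_add_distrib]
    refine Finset.sum_congr rfl fun i hi => ?_
    have hb : i ≤ n + 1 := by have := Finset.mem_range.mp hi; omega
    linear_combination (z^(i+1)) * keyR2C k n i hb
  have h0 : ((n:ℂ)+2) * ((gg k (n+2) 0 : ℕ) : ℂ)
      = ((k:ℂ)+1) * ((gg (k+1) (n+1) 0 : ℕ) : ℂ) := by
    have hn : (k+(n+2)).choose (k+1) * (k+1) = (k+(n+2)).choose k * (n+2) := by
      have := Nat.choose_succ_right_eq (k+(n+2)) k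
      rwa [show k+(n+2)-k = n+2 by omega] at this
    have hn' : (((k+(n+2)).choose (k+1) : ℕ) : ℂ) * ((k:ℂ)+1)
        = (((k+(n+2)).choose k : ℕ) : ℂ) * ((n:ℂ)+2) := by exact_mod_cast hn
    unfold gg
    simp only [Nat.sub_zero, Nat.choose_zero_right, mul_one]
    rw [show k+1+(n+1) = k+(n+2) by omega]
    linear_combination -hn'
  linear_combination hterm + h0

set_option maxHeartbeats 2000000 in
/-- The identity expressing `D = P_{d+1,d-1} P_{d+2,d-1} - P_{d+1,d-2} P_{d+2,d}` in terms of
`P_{d,d}` and `P_{d+1,d+1}`, as an identity of rational functions (stated for all `z` avoiding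
the poles). -/
theorem stmt12 (d : ℕ) (hd : 2 ≤ d) (z : ℂ) (hz0 : z ≠ 0)
    (hz3 : 1 + 3 * z ≠ 0) (hz4 : 1 + 4 * z ≠ 0) :
    Pval (d+1) (d-1) z * Pval (d+2) (d-1) z - Pval (d+1) (d-2) z * Pval (d+2) d z =
      ((d : ℂ) + 1) * Pval (d+1) (d+1) z ^ 2 / (2 * ((d : ℂ) + 2) * z * (1 + 3 * z))
        - 3 * (d : ℂ) * (3 * (d : ℂ) + 2) * (3 * (d : ℂ) + 4) * z * Pval d d z ^ 2 /
            (2 * ((d : ℂ) + 1) ^ 2 * ((d : ℂ) + 2) * (1 + 3 * z) * (1 + 4 * z))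
        - (2 + 8 * z + (d : ℂ) * (2 * (d : ℂ) + 3) * (2 + 9 * z)) *
              Pval d d z * Pval (d+1) (d+1) z /
            (2 * ((d : ℂ) + 1) * ((d : ℂ) + 2) * z * (1 + 3 * z) * (1 + 4 * z)) := by
  obtain ⟨e, rfl⟩ : ∃ e, d = e + 2 := ⟨d - 2, by omega⟩
  have h3 : ((e:ℂ)+3) ≠ 0 := by
    have : ((e+3 : ℕ) : ℂ) ≠ 0 := Nat.cast_ne_zero.mpr (by omega)
    push_cast at this; exact this
  have h4 : ((e:ℂ)+4) ≠ 0 := by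
    have : ((e+4 : ℕ) : ℂ) ≠ 0 := Nat.cast_ne_zero.mpr (by omega)
    push_cast at this; exact this
  have hE1 := R1 (e+2) e z
  have hE4 := R1 (e+2) (e+1) z
  have hE5 := R1 (e+2) (e+2) z
  have hE7 := R1 (e+3) (e+1) z
  have hE2 := R2 (e+2) e z
  have hE3 := R2 (e+2) (e+1) z
  have hE6 := R2 (e+2) (e+2) z
  have hE8 := R2 (e+3) (e+1) z
  have hE9 := R2 (e+3) (e+2) z
  simp only [show e+2+1 = e+3 by omega, show e+2+2 = e+4 by omega,
      show e+1+2 = e+3 by omega, show e+3+1 = e+4 by omega, show e+1+1 = e+2 by omega,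
      show e+3+2 = e+5 by omega, show e+2-1 = e+1 by omega, show e+2-2 = e by omega]
    at hE1 hE2 hE3 hE4 hE5 hE6 hE7 hE8 hE9 ⊢
  push_cast at hE2 hE3 hE6 hE8 hE9 ⊢
  have h3' : ((e:ℂ)+2+1) ≠ 0 := by rw [show ((e:ℂ)+2+1) = ((e:ℂ)+3) by ring]; exact h3
  have h4' : ((e:ℂ)+2+2) ≠ 0 := by rw [show ((e:ℂ)+2+2) = ((e:ℂ)+4) by ring]; exact h4
  set A := Pval (e+2) (e+2) z with hA
  set C := Pval (e+2) (e+3) z with hC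
  set X0 := Pval (e+3) e z with hX0
  set X1 := Pval (e+3) (e+1) z with hX1
  set X2 := Pval (e+3) (e+2) z with hX2
  set X3 := Pval (e+3) (e+3) z with hX3
  set X4 := Pval (e+3) (e+4) z with hX4
  set Y1 := Pval (e+4) (e+1) z with hY1
  set Y2 := Pval (e+4) (e+2) z with hY2
  set E := (e:ℂ) with hE
  have hX2e : X2 = C - 2*z*X1 := by
    apply mul_left_cancel₀ h3
    linear_combination -hE3
  have hX3e : X3 = 2*C - z*X1 := by
    linear_combination hX2e - hE4
  have C4p : X4 * (E+4) = (2*E+7)*X3 + z*(3*E+10)*X2 := by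
    linear_combination hE6 - (E+4)*hE5
  have CY1p : Y1 * ((E+4)*z*(1+4*z)) = (1+2*z)*(E+3)*X3 - (E+4)*(X4 - X3) := by
    linear_combination (-(E+4))*hE7 - (1+2*z)*hE8 + hE9
  have CY2p : Y2 * ((E+4)*(1+4*z)) = 2*(E+4)*(X4 - X3) - (E+3)*X3 := by
    linear_combination 2*(E+4)*hE7 + hE8 - 2*hE9
  have C1 : X1 * ((E+3)*(1+4*z)) = 2*(E+3)*(C - A) - (E+2)*A := by
    linear_combination 2*(E+3)*hE1 + hE2 - 2*hE3
  have C0 : X0 * ((E+3)*z*(1+4*z)) = (1+2*z)*(E+2)*A - (E+3)*(C - A) := by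
    linear_combination (-(E+3))*hE1 - (1+2*z)*hE2 + hE3
  have C3 : X3 * ((E+3)*(1+4*z))
      = 2*C*((E+3)*(1+4*z)) - z*(2*(E+3)*(C - A) - (E+2)*A) := by
    linear_combination ((E+3)*(1+4*z))*hX3e - z*C1
  have C2 : X2 * ((E+3)*(1+4*z))
      = C*((E+3)*(1+4*z)) - 2*z*(2*(E+3)*(C - A) - (E+2)*A) := by
    linear_combination ((E+3)*(1+4*z))*hX2e - 2*z*C1
  have C4 : X4 * ((E+3)*(E+4)*(1+4*z))
      = (2*E+7)*(2*C*((E+3)*(1+4*z)) - z*(2*(E+3)*(C - A) - (E+2)*A))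
        + z*(3*E+10)*(C*((E+3)*(1+4*z)) - 2*z*(2*(E+3)*(C - A) - (E+2)*A)) := by
    linear_combination ((E+3)*(1+4*z))*C4p + (2*E+7)*C3 + z*(3*E+10)*C2
  have CY1 : Y1 * ((E+3)*(E+4)^2*z*(1+4*z)^2)
      = ((1+2*z)*(E+3)+(E+4))*(E+4)*(2*C*((E+3)*(1+4*z)) - z*(2*(E+3)*(C - A) - (E+2)*A))
        - (E+4)*((2*E+7)*(2*C*((E+3)*(1+4*z)) - z*(2*(E+3)*(C - A) - (E+2)*A))
            + z*(3*E+10)*(C*((E+3)*(1+4*z)) - 2*z*(2*(E+3)*(C - A) - (E+2)*A))) := by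
    linear_combination ((E+3)*(E+4)*(1+4*z))*CY1p + (((1+2*z)*(E+3)+(E+4))*(E+4))*C3 - (E+4)*C4
  have CY2 : Y2 * ((E+3)*(E+4)^2*(1+4*z)^2)
      = 2*(E+4)*((2*E+7)*(2*C*((E+3)*(1+4*z)) - z*(2*(E+3)*(C - A) - (E+2)*A))
            + z*(3*E+10)*(C*((E+3)*(1+4*z)) - 2*z*(2*(E+3)*(C - A) - (E+2)*A)))
        - (2*(E+4)+(E+3))*(E+4)*(2*C*((E+3)*(1+4*z)) - z*(2*(E+3)*(C - A) - (E+2)*A)) := by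
    linear_combination ((E+3)*(E+4)*(1+4*z))*CY2p + 2*(E+4)*C4 - (2*(E+4)+(E+3))*(E+4)*C3
  have hD : 2*(1+3*z)*(E+3)^2*(E+4)^2*z*(1+4*z)^3 ≠ 0 := by
    apply mul_ne_zero; apply mul_ne_zero; apply mul_ne_zero; apply mul_ne_zero
    apply mul_ne_zero
    · exact two_ne_zero
    · exact hz3
    · exact pow_ne_zero 2 h3
    · exact pow_ne_zero 2 h4
    · exact hz0
    · exact pow_ne_zero 3 hz4
  have hL : (X1*Y1 - X0*Y2) * (2*(1+3*z)*(E+3)^2*(E+4)^2*z*(1+4*z)^3)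
      = 2*(1+3*z)*((2*(E+3)*(C - A) - (E+2)*A)
            * (((1+2*z)*(E+3)+(E+4))*(E+4)*(2*C*((E+3)*(1+4*z)) - z*(2*(E+3)*(C - A) - (E+2)*A))
              - (E+4)*((2*E+7)*(2*C*((E+3)*(1+4*z)) - z*(2*(E+3)*(C - A) - (E+2)*A))
                + z*(3*E+10)*(C*((E+3)*(1+4*z)) - 2*z*(2*(E+3)*(C - A) - (E+2)*A))))
          - ((1+2*z)*(E+2)*A - (E+3)*(C - A))
            * (2*(E+4)*((2*E+7)*(2*C*((E+3)*(1+4*z)) - z*(2*(E+3)*(C - A) - (E+2)*A))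
                + z*(3*E+10)*(C*((E+3)*(1+4*z)) - 2*z*(2*(E+3)*(C - A) - (E+2)*A)))
              - (2*(E+4)+(E+3))*(E+4)*(2*C*((E+3)*(1+4*z)) - z*(2*(E+3)*(C - A) - (E+2)*A)))) := by
    linear_combination (2*(1+3*z)*((E+3)*(E+4)^2*z*(1+4*z)^2)*Y1)*C1
      + (2*(1+3*z)*(2*(E+3)*(C - A) - (E+2)*A))*CY1
      - (2*(1+3*z)*((E+3)*(E+4)^2*(1+4*z)^2)*Y2)*C0
      - (2*(1+3*z)*((1+2*z)*(E+2)*A - (E+3)*(C - A)))*CY2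
  rw [(eq_div_iff hD).mpr hL]
  have hkey : 2*(1+3*z)*((2*(E+3)*(C - A) - (E+2)*A)
            * (((1+2*z)*(E+3)+(E+4))*(E+4)*(2*C*((E+3)*(1+4*z)) - z*(2*(E+3)*(C - A) - (E+2)*A))
              - (E+4)*((2*E+7)*(2*C*((E+3)*(1+4*z)) - z*(2*(E+3)*(C - A) - (E+2)*A))
                + z*(3*E+10)*(C*((E+3)*(1+4*z)) - 2*z*(2*(E+3)*(C - A) - (E+2)*A))))
          - ((1+2*z)*(E+2)*A - (E+3)*(C - A))
            * (2*(E+4)*((2*E+7)*(2*C*((E+3)*(1+4*z)) - z*(2*(E+3)*(C - A) - (E+2)*A))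
                + z*(3*E+10)*(C*((E+3)*(1+4*z)) - 2*z*(2*(E+3)*(C - A) - (E+2)*A)))
              - (2*(E+4)+(E+3))*(E+4)*(2*C*((E+3)*(1+4*z)) - z*(2*(E+3)*(C - A) - (E+2)*A))))
      = (E+3)^3*(E+4)*(1+4*z)^3*X3^2
        - 3*(E+2)*(3*(E+2)+2)*(3*(E+2)+4)*(E+4)*z^2*(1+4*z)^2*A^2
        - (2+8*z+(E+2)*(2*(E+2)+3)*(2+9*z))*(E+3)*(E+4)*(1+4*z)^2*A*X3 := by
    linear_combination (-((E+3)*(E+4)*(1+4*z)*((E+3)*(1+4*z)*X3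
        + (2*C*((E+3)*(1+4*z)) - z*(2*(E+3)*(C - A) - (E+2)*A)))
        - (2+8*z+(E+2)*(2*(E+2)+3)*(2+9*z))*(E+4)*(1+4*z)*A))*C3
  rw [hkey]
  rw [div_sub_div _ _ (mul_ne_zero (mul_ne_zero (mul_ne_zero two_ne_zero h4') hz0) hz3)
        (mul_ne_zero (mul_ne_zero (mul_ne_zero (mul_ne_zero two_ne_zero (pow_ne_zero 2 h3')) h4') hz3) hz4),
      div_sub_div _ _ (mul_ne_zero (mul_ne_zero (mul_ne_zero (mul_ne_zero two_ne_zero h4') hz0) hz3)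
          (mul_ne_zero (mul_ne_zero (mul_ne_zero (mul_ne_zero two_ne_zero (pow_ne_zero 2 h3')) h4') hz3) hz4))
        (mul_ne_zero (mul_ne_zero (mul_ne_zero (mul_ne_zero (mul_ne_zero two_ne_zero h3') h4') hz0) hz3) hz4),
      div_eq_div_iff hD (by
        exact mul_ne_zero
          (mul_ne_zero (mul_ne_zero (mul_ne_zero (mul_ne_zero two_ne_zero h4') hz0) hz3)
            (mul_ne_zero (mul_ne_zero (mul_ne_zero (mul_ne_zero two_ne_zero (pow_ne_zero 2 h3')) h4') hz3) hz4))
          (mul_ne_zero (mul_ne_zero (mul_ne_zero (mul_ne_zero (mul_ne_zero two_ne_zero h3') h4') hz0) hz3) hz4))]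
  ring
end
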